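/- arXiv:2105.14981 — 6 statements merged into one kernel-verified Lean document; each statement's English description precedes it below -/
import Mathlib

section
/- For all n ≥ 0, the integral over [-1,1] of (1+t)·P_n^{(0,2)}(t) dt equals 4·(-1)^n/((n+1)(n+2)), where P_n^{(0,2)} is the Jacobi polynomial of degree n with parameters α=0, β=2. -/
open MeasureTheory intervalIntegral Finset

/-- The Jacobi polynomial `P_n^{(a,b)}` with nonnegative integer parameters,
given by the standard finite-sum formula, normalized by
`P_n^{(a,b)}(1) = (a+1)_n / n!`. -/
noncomputable def jacobiP (a b n : ℕ) (x : ℝ) : ℝ :=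
  ∑ s ∈ Finset.range (n + 1),
    (Nat.choose (n + a) (n - s) : ℝ) * (Nat.choose (n + b) s : ℝ) *
      ((x - 1) / 2) ^ s * ((x + 1) / 2) ^ (n - s)

lemma betaNat (b : ℕ) : ∀ a : ℕ, ∫ x in (0:ℝ)..1, x ^ a * (1 - x) ^ b
    = (a.factorial * b.factorial : ℝ) / (a + b + 1).factorial := by
  induction b with
  | zero =>
    intro a
    simp [integral_pow, Nat.factorial_succ]
    field_simp
  | succ b ih =>
    intro a
    have hF : ∀ x ∈ Set.uIcc (0:ℝ) 1, HasDerivAt (fun x : ℝ => x ^ (a+1) * (1 - x) ^ (b+1))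
        ((a+1 : ℝ) * x ^ a * (1 - x) ^ (b+1) - (b+1 : ℝ) * (x ^ (a+1) * (1 - x) ^ b)) x := by
      intro x _
      have h1 : HasDerivAt (fun x : ℝ => x ^ (a+1)) ((a+1 : ℝ) * x ^ a) x := by
        simpa using (hasDerivAt_pow (a+1) x)
      have h2 : HasDerivAt (fun x : ℝ => (1 - x) ^ (b+1)) (-((b+1 : ℝ) * (1 - x) ^ b)) x := by
        have := ((hasDerivAt_pow (b+1) (1 - x)).comp x
          ((hasDerivAt_const x (1:ℝ)).sub (hasDerivAt_id x)))
        simpa [Function.comp_def] using this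
      have := h1.mul h2
      exact this.congr_deriv (by ring)
    have hint : IntervalIntegrable (fun x : ℝ =>
        (a+1 : ℝ) * x ^ a * (1 - x) ^ (b+1) - (b+1 : ℝ) * (x ^ (a+1) * (1 - x) ^ b))
        volume 0 1 := by
      apply Continuous.intervalIntegrable; continuity
    have key := intervalIntegral.integral_eq_sub_of_hasDerivAt hF hint
    simp only [one_pow, sub_self, zero_pow, mul_zero, zero_mul, Nat.succ_ne_zero,
      Ne, not_false_iff, one_mul, sub_zero] at key
    have hi1 : IntervalIntegrable (fun x : ℝ => (a+1 : ℝ) * x ^ a * (1 - x) ^ (b+1)) volume 0 1 := by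
      apply Continuous.intervalIntegrable; continuity
    have hi2 : IntervalIntegrable (fun x : ℝ => (b+1 : ℝ) * (x ^ (a+1) * (1 - x) ^ b)) volume 0 1 := by
      apply Continuous.intervalIntegrable; continuity
    rw [intervalIntegral.integral_sub hi1 hi2] at key
    have e1 : ∫ x in (0:ℝ)..1, (a+1 : ℝ) * x ^ a * (1 - x) ^ (b+1)
        = (a+1 : ℝ) * ∫ x in (0:ℝ)..1, x ^ a * (1 - x) ^ (b+1) := by
      rw [← intervalIntegral.integral_const_mul]; congr 1; ext x; ring
    have e2 : ∫ x in (0:ℝ)..1, (b+1 : ℝ) * (x ^ (a+1) * (1 - x) ^ b)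
        = (b+1 : ℝ) * ∫ x in (0:ℝ)..1, x ^ (a+1) * (1 - x) ^ b := by
      rw [← intervalIntegral.integral_const_mul]
    rw [e1, e2, ih (a+1), sub_eq_zero] at key
    have ha : (a+1 : ℝ) ≠ 0 := by positivity
    field_simp at key ⊢
    rw [show a + (b+1) + 1 = a + 1 + b + 1 by ring]
    push_cast [Nat.factorial_succ]
    push_cast [Nat.factorial_succ] at key
    nlinarith [key]

lemma termInt (n s : ℕ) (hs : s ≤ n) :
    ∫ t in (-1:ℝ)..1, (1 + t) * (((t - 1) / 2) ^ s * ((t + 1) / 2) ^ (n - s))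
      = (-1:ℝ) ^ s * 4 * ((n - s + 1).factorial * s.factorial : ℝ) / (n + 2).factorial := by
  have h := intervalIntegral.smul_integral_comp_mul_add
    (f := fun u : ℝ => 2 * u ^ (n - s + 1) * (u - 1) ^ s) (a := (-1:ℝ)) (b := 1)
    ((2:ℝ)⁻¹) ((2:ℝ)⁻¹)
  rw [show (2:ℝ)⁻¹ * (-1) + 2⁻¹ = 0 by norm_num, show (2:ℝ)⁻¹ * 1 + 2⁻¹ = 1 by norm_num,
    smul_eq_mul] at h
  have e : (fun t : ℝ => (1 + t) * (((t - 1) / 2) ^ s * ((t + 1) / 2) ^ (n - s)))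
      = fun t : ℝ => 2 * ((2:ℝ)⁻¹ * t + 2⁻¹) ^ (n - s + 1) * ((2:ℝ)⁻¹ * t + 2⁻¹ - 1) ^ s := by
    funext t
    rw [pow_succ]
    ring
  rw [e]
  have h2 : (∫ t in (-1:ℝ)..1,
      2 * ((2:ℝ)⁻¹ * t + 2⁻¹) ^ (n - s + 1) * ((2:ℝ)⁻¹ * t + 2⁻¹ - 1) ^ s)
      = 2 * ∫ u in (0:ℝ)..1, 2 * u ^ (n - s + 1) * (u - 1) ^ s := by
    rw [← h]; ring
  rw [h2]
  have e2 : (fun u : ℝ => 2 * u ^ (n - s + 1) * (u - 1) ^ s)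
      = fun u : ℝ => ((-1:ℝ) ^ s * 2) * (u ^ (n - s + 1) * (1 - u) ^ s) := by
    funext u
    rw [show (u - 1) = -(1 - u) by ring, neg_pow]
    ring
  rw [e2, intervalIntegral.integral_const_mul, betaNat s (n - s + 1)]
  rw [show n - s + 1 + s + 1 = n + 2 by omega]
  ring

lemma partial_alt (N : ℕ) (m : ℕ) :
    ∑ s ∈ range (m + 1), (-1 : ℤ) ^ s * ((N + 1).choose s) = (-1) ^ m * N.choose m := by
  induction m with
  | zero => simp
  | succ m ih =>
    rw [Finset.sum_range_succ, ih, Nat.choose_succ_succ]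
    push_cast
    ring

lemma swap_sum (f : ℕ → ℤ) (n : ℕ) :
    ∑ t ∈ range (n + 1), ∑ s ∈ range (t + 1), f s
      = ∑ s ∈ range (n + 1), ((n + 1 - s : ℕ) : ℤ) * f s := by
  induction n with
  | zero => simp
  | succ n ih =>
    rw [Finset.sum_range_succ, ih]
    have step : ∑ s ∈ range (n + 2), ((n + 2 - s : ℕ) : ℤ) * f s
        = (∑ s ∈ range (n + 2), ((n + 1 - s : ℕ) : ℤ) * f s) + ∑ s ∈ range (n + 2), f s := by
      rw [← Finset.sum_add_distrib]
      refine Finset.sum_congr rfl fun s hs => ?_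
      have hs' : s ≤ n + 1 := by simpa [Nat.lt_succ_iff] using Finset.mem_range.mp hs
      have h2 : n + 2 - s = (n + 1 - s) + 1 := by omega
      rw [h2]
      push_cast
      ring
    rw [step, Finset.sum_range_succ (fun s => ((n + 1 - s : ℕ) : ℤ) * f s) (n + 1)]
    simp

lemma keysum (n : ℕ) :
    ∑ s ∈ range (n + 1), (-1 : ℤ) ^ s * (((n + 1 - s : ℕ) : ℤ) * ((n + 2).choose s)) = (-1) ^ n := by
  have h1 : ∑ s ∈ range (n + 1), ((n + 1 - s : ℕ) : ℤ) * ((-1 : ℤ) ^ s * ((n + 2).choose s))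
      = ∑ t ∈ range (n + 1), ∑ s ∈ range (t + 1), (-1 : ℤ) ^ s * ((n + 2).choose s) :=
    (swap_sum _ n).symm
  calc ∑ s ∈ range (n + 1), (-1 : ℤ) ^ s * (((n + 1 - s : ℕ) : ℤ) * ((n + 2).choose s))
      = ∑ s ∈ range (n + 1), ((n + 1 - s : ℕ) : ℤ) * ((-1 : ℤ) ^ s * ((n + 2).choose s)) := by
        refine Finset.sum_congr rfl fun s _ => by ring
    _ = ∑ t ∈ range (n + 1), ∑ s ∈ range (t + 1), (-1 : ℤ) ^ s * ((n + 2).choose s) := h1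
    _ = ∑ t ∈ range (n + 1), (-1 : ℤ) ^ t * ((n + 1).choose t) := by
        refine Finset.sum_congr rfl fun t _ => partial_alt (n + 1) t
    _ = (-1 : ℤ) ^ n * (n.choose n) := partial_alt n n
    _ = (-1) ^ n := by simp

theorem integral_one_add_mul_jacobiP_zero_two (n : ℕ) :
    ∫ t in (-1 : ℝ)..1, (1 + t) * jacobiP 0 2 n t
      = 4 * (-1 : ℝ) ^ n / ((n + 1) * (n + 2)) := by
  simp only [jacobiP, Nat.add_zero, Finset.mul_sum]
  rw [intervalIntegral.integral_finset_sum]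
  · have hterm : ∀ s ∈ range (n + 1),
        (∫ t in (-1:ℝ)..1, (1 + t) * ((n.choose (n - s) : ℝ) * (((n + 2).choose s) : ℝ) *
          ((t - 1) / 2) ^ s * ((t + 1) / 2) ^ (n - s)))
        = 4 * (n.factorial : ℝ) / ((n + 2).factorial : ℝ) *
            ((-1 : ℝ) ^ s * (((n + 1 - s : ℕ) : ℝ) * (((n + 2).choose s : ℕ) : ℝ))) := by
      intro s hs
      have hsn : s ≤ n := by simpa [Nat.lt_succ_iff] using Finset.mem_range.mp hs
      have e : (fun t : ℝ => (1 + t) * ((n.choose (n - s) : ℝ) * (((n + 2).choose s) : ℝ) *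
            ((t - 1) / 2) ^ s * ((t + 1) / 2) ^ (n - s)))
          = fun t : ℝ => ((n.choose (n - s) : ℝ) * (((n + 2).choose s) : ℝ)) *
            ((1 + t) * (((t - 1) / 2) ^ s * ((t + 1) / 2) ^ (n - s))) := by
        funext t; ring
      rw [e, intervalIntegral.integral_const_mul, termInt n s hsn, Nat.choose_symm hsn]
      have hfac : (n.choose s * ((n - s + 1).factorial * s.factorial) : ℕ)
          = (n + 1 - s) * n.factorial := by
        have h2 := Nat.choose_mul_factorial_mul_factorial hsn
        have h3 : (n - s + 1).factorial = (n - s + 1) * (n - s).factorial := Nat.factorial_succ _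
        have h4 : n + 1 - s = n - s + 1 := by omega
        rw [h3, h4, ← h2]; ring
      have hc := congrArg (Nat.cast : ℕ → ℝ) hfac
      push_cast [-Nat.cast_sub] at hc
      have hne : ((n + 2).factorial : ℝ) ≠ 0 := by positivity
      field_simp
      linear_combination ((((n + 2).choose s : ℕ) : ℝ)) * hc
    rw [Finset.sum_congr rfl hterm, ← Finset.mul_sum]
    have hks := congrArg (Int.cast : ℤ → ℝ) (keysum n)
    push_cast [-Nat.cast_sub] at hks
    rw [hks]
    have h5 : ((n + 2).factorial : ℝ) = (n + 2) * ((n + 1) * (n.factorial : ℝ)) := by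
      rw [show n + 2 = (n + 1) + 1 from rfl, Nat.factorial_succ, Nat.factorial_succ]
      push_cast; ring
    have h6 : (n.factorial : ℝ) ≠ 0 := by positivity
    rw [h5]
    have h7 : (n : ℝ) + 1 ≠ 0 := by positivity
    have h8 : (n : ℝ) + 2 ≠ 0 := by positivity
    field_simp
  · intro i hi
    apply Continuous.intervalIntegrable
    fun_prop
end

section
/- For all n ≥ 0, the integral over [-1,1] of (1+t)·(P_n^{(0,2)}(t))^2 dt equals 2. -/
open MeasureTheory intervalIntegral Finset

/-! ### Combinatorial lemmas -/

lemma alt_choose_real (N : ℕ) (h : N ≠ 0) :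
    ∑ s ∈ range (N + 1), (-1 : ℝ) ^ s * (N.choose s : ℝ) = 0 := by
  have h2 := Int.alternating_sum_range_choose (n := N)
  rw [if_neg h] at h2
  have h3 : ((∑ m ∈ range (N + 1), (-1 : ℤ) ^ m * (N.choose m : ℤ) : ℤ) : ℝ) = 0 := by
    rw [h2]; norm_num
  push_cast at h3
  exact h3

/-- Finite difference step for alternating binomial sums. -/
lemma alt_step (N : ℕ) (f : ℕ → ℝ) :
    ∑ s ∈ range (N + 2), (-1 : ℝ) ^ s * ((N + 1).choose s : ℝ) * f s
    = ∑ s ∈ range (N + 1), (-1 : ℝ) ^ s * (N.choose s : ℝ) * (f s - f (s + 1)) := by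
  have key : ∀ i : ℕ, (-1 : ℝ) ^ (i + 1) * ((N + 1).choose (i + 1) : ℝ) * f (i + 1)
      = -((-1 : ℝ) ^ i * (N.choose i : ℝ) * f (i + 1))
        - (-1 : ℝ) ^ i * (N.choose (i + 1) : ℝ) * f (i + 1) := by
    intro i
    have hc : ((N + 1).choose (i + 1) : ℝ) = (N.choose i : ℝ) + (N.choose (i + 1) : ℝ) := by
      exact_mod_cast Nat.choose_succ_succ N i
    rw [hc]; ring
  rw [Finset.sum_range_succ' _ (N + 1)]
  simp only [key, pow_zero, Nat.choose_zero_right, Nat.cast_one, one_mul]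
  have split : ∑ i ∈ range (N + 1),
      (-((-1 : ℝ) ^ i * (N.choose i : ℝ) * f (i + 1))
        - (-1 : ℝ) ^ i * (N.choose (i + 1) : ℝ) * f (i + 1))
      = -(∑ i ∈ range (N + 1), (-1 : ℝ) ^ i * (N.choose i : ℝ) * f (i + 1))
        - ∑ i ∈ range (N + 1), (-1 : ℝ) ^ i * (N.choose (i + 1) : ℝ) * f (i + 1) := by
    rw [Finset.sum_sub_distrib, Finset.sum_neg_distrib]
  rw [split]
  have drop : ∑ i ∈ range (N + 1), (-1 : ℝ) ^ i * (N.choose (i + 1) : ℝ) * f (i + 1)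
      = ∑ i ∈ range N, (-1 : ℝ) ^ i * (N.choose (i + 1) : ℝ) * f (i + 1) := by
    rw [Finset.sum_range_succ, Nat.choose_succ_self]
    norm_num
  rw [drop]
  have rhs : ∑ s ∈ range (N + 1), (-1 : ℝ) ^ s * (N.choose s : ℝ) * (f s - f (s + 1))
      = ∑ s ∈ range (N + 1), (-1 : ℝ) ^ s * (N.choose s : ℝ) * f s
        - ∑ s ∈ range (N + 1), (-1 : ℝ) ^ s * (N.choose s : ℝ) * f (s + 1) := by
    rw [← Finset.sum_sub_distrib]
    exact Finset.sum_congr rfl fun s _ => by ring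
  rw [rhs, Finset.sum_range_succ' (fun s => (-1 : ℝ) ^ s * (N.choose s : ℝ) * f s) N]
  have shift : ∀ i : ℕ, (-1 : ℝ) ^ (i + 1) * (N.choose (i + 1) : ℝ) * f (i + 1)
      = -((-1 : ℝ) ^ i * (N.choose (i + 1) : ℝ) * f (i + 1)) := by
    intro i; ring
  simp only [shift, pow_zero, Nat.choose_zero_right, Nat.cast_one, one_mul,
    Finset.sum_neg_distrib]
  ring

/-- Alternating Vandermonde identity. -/
lemma alt_vandermonde : ∀ (d N K : ℕ), d < N → N ≤ K →
    ∑ s ∈ range (N + 1), (-1 : ℝ) ^ s * (N.choose s : ℝ) * ((K - s).choose d : ℝ) = 0 := by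
  intro d
  induction d with
  | zero =>
    intro N K hd hK
    obtain ⟨N', rfl⟩ : ∃ N', N = N' + 1 := ⟨N - 1, by omega⟩
    have := alt_step N' (fun s => ((K - s).choose 0 : ℝ))
    simp only [Nat.choose_zero_right, Nat.cast_one, sub_self, mul_zero,
      Finset.sum_const_zero] at this
    simpa [Nat.choose_zero_right] using this
  | succ d ih =>
    intro N K hd hK
    obtain ⟨N', rfl⟩ : ∃ N', N = N' + 1 := ⟨N - 1, by omega⟩
    rw [alt_step N' (fun s => ((K - s).choose (d + 1) : ℝ))]
    have congr1 : ∀ s ∈ range (N' + 1),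
        (-1 : ℝ) ^ s * (N'.choose s : ℝ) *
          (((K - s).choose (d + 1) : ℝ) - ((K - (s + 1)).choose (d + 1) : ℝ))
        = (-1 : ℝ) ^ s * (N'.choose s : ℝ) * (((K - 1 - s).choose d : ℝ)) := by
      intro s hs
      simp only [Finset.mem_range] at hs
      have h1 : s + 1 ≤ K := by omega
      have h2 : K - s = (K - 1 - s) + 1 := by omega
      have h3 : K - (s + 1) = K - 1 - s := by omega
      rw [h2, h3, Nat.choose_succ_succ]
      push_cast
      ring
    rw [Finset.sum_congr rfl congr1]
    exact ih (N') (K - 1) (by omega) (by omega)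

lemma sigma_pos (n m : ℕ) (h1 : 1 ≤ m) (h2 : m ≤ n) :
    ∑ s ∈ range (n + 1), (-1 : ℝ) ^ s * ((n + 2).choose s : ℝ) *
      (((n - s) + m + 1).choose (m + 1) : ℝ) = 0 := by
  have key := alt_vandermonde (m + 1) (n + 2) (n + m + 1) (by omega) (by omega)
  have e1 : ∀ s ∈ range (n + 1), (-1 : ℝ) ^ s * ((n + 2).choose s : ℝ) *
      (((n - s) + m + 1).choose (m + 1) : ℝ)
      = (-1 : ℝ) ^ s * ((n + 2).choose s : ℝ) * (((n + m + 1 - s).choose (m + 1) : ℝ)) := by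
    intro s hs
    simp only [Finset.mem_range] at hs
    have : (n - s) + m + 1 = n + m + 1 - s := by omega
    rw [this]
  rw [Finset.sum_congr rfl e1]
  have expand : ∑ s ∈ range (n + 2 + 1), (-1 : ℝ) ^ s * ((n + 2).choose s : ℝ) *
      ((n + m + 1 - s).choose (m + 1) : ℝ)
      = ∑ s ∈ range (n + 1), (-1 : ℝ) ^ s * ((n + 2).choose s : ℝ) *
      ((n + m + 1 - s).choose (m + 1) : ℝ) := by
    rw [Finset.sum_range_succ, Finset.sum_range_succ]
    have z1 : n + m + 1 - (n + 1) = m := by omega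
    have z2 : n + m + 1 - (n + 2) = m - 1 := by omega
    have c1 : (m).choose (m + 1) = 0 := Nat.choose_eq_zero_of_lt (by omega)
    have c2 : (m - 1).choose (m + 1) = 0 := Nat.choose_eq_zero_of_lt (by omega)
    rw [z1, z2, c1, c2]
    norm_num
  rw [← expand]
  exact key

lemma sigma_zero (n : ℕ) :
    ∑ s ∈ range (n + 1), (-1 : ℝ) ^ s * ((n + 2).choose s : ℝ) * ((n : ℝ) + 1 - s) =
      (-1 : ℝ) ^ n := by
  have T : ∑ s ∈ range (n + 2 + 1), (-1 : ℝ) ^ s * ((n + 2).choose s : ℝ) * ((n : ℝ) + 1 - s)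
      = 0 := by
    have split : ∑ s ∈ range (n + 2 + 1), (-1 : ℝ) ^ s * ((n + 2).choose s : ℝ) *
        ((n : ℝ) + 1 - s)
        = ((n : ℝ) + 1) * ∑ s ∈ range (n + 2 + 1), (-1 : ℝ) ^ s * ((n + 2).choose s : ℝ)
          - ∑ s ∈ range (n + 2 + 1), (-1 : ℝ) ^ s * ((n + 2).choose s : ℝ) * (s : ℝ) := by
      rw [Finset.mul_sum, ← Finset.sum_sub_distrib]
      exact Finset.sum_congr rfl fun s _ => by ring
    rw [split, alt_choose_real (n + 2) (by omega), mul_zero]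
    have second : ∑ s ∈ range (n + 2 + 1), (-1 : ℝ) ^ s * ((n + 2).choose s : ℝ) * (s : ℝ)
        = 0 := by
      rw [Finset.sum_range_succ' (fun s => (-1 : ℝ) ^ s * ((n + 2).choose s : ℝ) * (s : ℝ))]
      simp only [Nat.cast_zero, mul_zero, add_zero]
      have e : ∀ i ∈ range (n + 2), (-1 : ℝ) ^ (i + 1) * ((n + 2).choose (i + 1) : ℝ) *
          ((i : ℝ) + 1)
          = -((n : ℝ) + 2) * ((-1 : ℝ) ^ i * ((n + 1).choose i : ℝ)) := by
        intro i _
        have hc : ((n + 2).choose (i + 1) : ℝ) * ((i : ℝ) + 1) = ((n : ℝ) + 2) *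
            ((n + 1).choose i : ℝ) := by
          have := Nat.add_one_mul_choose_eq (n + 1) i
          have h2 : (n + 2) * (n + 1).choose i = (n + 2).choose (i + 1) * (i + 1) := by
            exact_mod_cast this
          exact_mod_cast by
            have := congrArg (Nat.cast : ℕ → ℝ) h2
            push_cast at this
            linarith [this]
        calc (-1 : ℝ) ^ (i + 1) * ((n + 2).choose (i + 1) : ℝ) * ((i : ℝ) + 1)
            = -((-1 : ℝ) ^ i * (((n + 2).choose (i + 1) : ℝ) * ((i : ℝ) + 1))) := by ring
          _ = -((n : ℝ) + 2) * ((-1 : ℝ) ^ i * ((n + 1).choose i : ℝ)) := by rw [hc]; ring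
      rw [Finset.sum_congr rfl (fun i hi => by
        push_cast
        exact e i hi)]
      rw [← Finset.mul_sum, alt_choose_real (n + 1) (by omega), mul_zero]
    rw [second, sub_zero]
  have expand : ∑ s ∈ range (n + 2 + 1), (-1 : ℝ) ^ s * ((n + 2).choose s : ℝ) *
      ((n : ℝ) + 1 - s)
      = ∑ s ∈ range (n + 1), (-1 : ℝ) ^ s * ((n + 2).choose s : ℝ) * ((n : ℝ) + 1 - s)
        + ((-1 : ℝ) ^ (n + 1) * ((n + 2).choose (n + 1) : ℝ) * ((n : ℝ) + 1 - ((n : ℝ) + 1))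
          + (-1 : ℝ) ^ (n + 2) * ((n + 2).choose (n + 2) : ℝ) * ((n : ℝ) + 1 - ((n : ℝ) + 2))) := by
    rw [Finset.sum_range_succ, Finset.sum_range_succ]
    push_cast
    ring
  rw [expand, Nat.choose_self] at T
  have hsq : (-1 : ℝ) ^ (n + 2) = (-1 : ℝ) ^ n := by
    rw [pow_add]; norm_num
  rw [hsq] at T
  push_cast at T
  linarith

/-! ### The basic beta integral -/

lemma beta_int : ∀ (a b : ℕ), (∫ t in (-1 : ℝ)..1, ((t - 1) / 2) ^ a * ((t + 1) / 2) ^ b)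
    = 2 * (-1 : ℝ) ^ a * a.factorial * b.factorial / (a + b + 1).factorial := by
  intro a
  induction a with
  | zero =>
    intro b
    have e1 : (∫ t in (-1 : ℝ)..1, ((t - 1) / 2) ^ 0 * ((t + 1) / 2) ^ b)
        = ∫ t in (-1 : ℝ)..1, (fun x : ℝ => (x / 2) ^ b) (t + 1) := by
      apply intervalIntegral.integral_congr
      intro t _
      simp
    rw [e1, intervalIntegral.integral_comp_add_right (fun x : ℝ => (x / 2) ^ b) 1]
    norm_num
    have e2 : (∫ x in (0 : ℝ)..2, (x / 2) ^ b) = ∫ x in (0 : ℝ)..2, (2⁻¹ : ℝ) ^ b * x ^ b := by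
      apply intervalIntegral.integral_congr
      intro x _
      simp only []
      rw [div_eq_mul_inv]
      ring
    rw [e2, intervalIntegral.integral_const_mul, integral_pow]
    have hb : ((b + 1).factorial : ℝ) = (b + 1) * b.factorial := by
      exact_mod_cast Nat.factorial_succ b
    have hb0 : (b.factorial : ℝ) ≠ 0 := by exact_mod_cast b.factorial_ne_zero
    rw [hb]
    have h2 : (2 : ℝ) ^ (b + 1) = 2 * 2 ^ b := by ring
    field_simp
    rw [zero_pow (Nat.succ_ne_zero b), sub_zero, h2, mul_left_comm, ← mul_pow]
    norm_num
  | succ a ih =>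
    intro b
    -- integration by parts relation
    have hderiv : ∀ t ∈ Set.uIcc (-1 : ℝ) 1,
        HasDerivAt (fun t : ℝ => ((t - 1) / 2) ^ (a + 1) * ((t + 1) / 2) ^ (b + 1))
          (((a : ℝ) + 1) / 2 * (((t - 1) / 2) ^ a * ((t + 1) / 2) ^ (b + 1))
            + ((b : ℝ) + 1) / 2 * (((t - 1) / 2) ^ (a + 1) * ((t + 1) / 2) ^ b)) t := by
      intro t _
      have h1 : HasDerivAt (fun t : ℝ => (t - 1) / 2) (1 / 2) t := by
        simpa using (((hasDerivAt_id t).sub_const 1).div_const 2)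
      have h2 : HasDerivAt (fun t : ℝ => (t + 1) / 2) (1 / 2) t := by
        simpa using (((hasDerivAt_id t).add_const 1).div_const 2)
      have h3 := (h1.fun_pow (a + 1)).fun_mul (h2.fun_pow (b + 1))
      refine h3.congr_deriv ?_
      push_cast
      ring
    have hcont : Continuous (fun t : ℝ =>
        ((a : ℝ) + 1) / 2 * (((t - 1) / 2) ^ a * ((t + 1) / 2) ^ (b + 1))
          + ((b : ℝ) + 1) / 2 * (((t - 1) / 2) ^ (a + 1) * ((t + 1) / 2) ^ b)) := by
      fun_prop
    have hibp := intervalIntegral.integral_eq_sub_of_hasDerivAt hderiv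
      (hcont.intervalIntegrable (-1) 1)
    simp only [show ((1 : ℝ) - 1) / 2 = 0 by norm_num,
      show ((-1 : ℝ) + 1) / 2 = 0 by norm_num, zero_pow (Nat.succ_ne_zero a),
      zero_pow (Nat.succ_ne_zero b), zero_mul, mul_zero, sub_zero] at hibp
    have hint1 : IntervalIntegrable
        (fun t : ℝ => ((a : ℝ) + 1) / 2 * (((t - 1) / 2) ^ a * ((t + 1) / 2) ^ (b + 1)))
        volume (-1) 1 := by
      apply Continuous.intervalIntegrable; fun_prop
    have hint2 : IntervalIntegrable
        (fun t : ℝ => ((b : ℝ) + 1) / 2 * (((t - 1) / 2) ^ (a + 1) * ((t + 1) / 2) ^ b))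
        volume (-1) 1 := by
      apply Continuous.intervalIntegrable; fun_prop
    rw [intervalIntegral.integral_add hint1 hint2, intervalIntegral.integral_const_mul,
      intervalIntegral.integral_const_mul, ih (b + 1)] at hibp
    -- now solve for the target integral
    have hb1 : ((b : ℝ) + 1) / 2 ≠ 0 := by positivity
    have goal_eq : (∫ t in (-1 : ℝ)..1, ((t - 1) / 2) ^ (a + 1) * ((t + 1) / 2) ^ b)
        = -(((a : ℝ) + 1) / 2 * (2 * (-1 : ℝ) ^ a * a.factorial * (b + 1).factorial /
            (a + (b + 1) + 1).factorial)) / (((b : ℝ) + 1) / 2) := by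
      field_simp at hibp ⊢
      linarith
    rw [goal_eq]
    have hfa : ((a + 1).factorial : ℝ) = ((a : ℝ) + 1) * a.factorial := by
      exact_mod_cast Nat.factorial_succ a
    have hfb : ((b + 1).factorial : ℝ) = ((b : ℝ) + 1) * b.factorial := by
      exact_mod_cast Nat.factorial_succ b
    have hee : a + (b + 1) + 1 = a + 1 + b + 1 := by omega
    rw [hee] at *
    rw [hfa, hfb]
    have hne : ((a + 1 + b + 1).factorial : ℝ) ≠ 0 := by
      exact_mod_cast (a + 1 + b + 1).factorial_ne_zero
    field_simp
    ring

/-! ### The moments `M(m)` -/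

lemma jacobiP_continuous (a b n : ℕ) : Continuous (jacobiP a b n) := by
  unfold jacobiP
  apply continuous_finset_sum
  intro i _
  fun_prop

noncomputable def Mint (n m : ℕ) : ℝ :=
  ∫ t in (-1 : ℝ)..1, (1 + t) * ((t + 1) / 2) ^ m * jacobiP 0 2 n t

lemma Mint_eq (n m : ℕ) : Mint n m = ∑ s ∈ range (n + 1),
    (n.choose (n - s) : ℝ) * ((n + 2).choose s : ℝ) *
      (4 * (-1 : ℝ) ^ s * s.factorial * ((n - s) + m + 1).factorial /
        (n + m + 2).factorial) := by
  unfold Mint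
  have e : ∀ t : ℝ, (1 + t) * ((t + 1) / 2) ^ m * jacobiP 0 2 n t
      = ∑ s ∈ range (n + 1), ((n.choose (n - s) : ℝ) * ((n + 2).choose s : ℝ) * 2) *
          (((t - 1) / 2) ^ s * ((t + 1) / 2) ^ ((n - s) + m + 1)) := by
    intro t
    unfold jacobiP
    rw [Finset.mul_sum]
    apply Finset.sum_congr rfl
    intro s hs
    have hu : ((t + 1) / 2) ^ ((n - s) + m + 1)
        = ((t + 1) / 2) ^ (n - s) * ((t + 1) / 2) ^ m * ((t + 1) / 2) := by
      rw [pow_add, pow_add, pow_one]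
    rw [hu]
    simp only [Nat.add_zero]
    ring
  have e2 : (∫ t in (-1 : ℝ)..1, (1 + t) * ((t + 1) / 2) ^ m * jacobiP 0 2 n t)
      = ∫ t in (-1 : ℝ)..1, ∑ s ∈ range (n + 1),
          ((n.choose (n - s) : ℝ) * ((n + 2).choose s : ℝ) * 2) *
          (((t - 1) / 2) ^ s * ((t + 1) / 2) ^ ((n - s) + m + 1)) :=
    intervalIntegral.integral_congr fun t _ => e t
  rw [e2, intervalIntegral.integral_finset_sum]
  · apply Finset.sum_congr rfl
    intro s hs
    simp only [Finset.mem_range] at hs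
    have hs' : s ≤ n := by omega
    rw [intervalIntegral.integral_const_mul, beta_int]
    have hexp : s + ((n - s) + m + 1) + 1 = n + m + 2 := by omega
    rw [hexp]
    ring
  · intro s _
    apply Continuous.intervalIntegrable
    fun_prop

lemma Mint_pos (n m : ℕ) (h1 : 1 ≤ m) (h2 : m ≤ n) : Mint n m = 0 := by
  rw [Mint_eq]
  have e : ∀ s ∈ range (n + 1),
      (n.choose (n - s) : ℝ) * ((n + 2).choose s : ℝ) *
        (4 * (-1 : ℝ) ^ s * s.factorial * ((n - s) + m + 1).factorial /
          (n + m + 2).factorial)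
      = (4 * (n.factorial : ℝ) * (m + 1).factorial / (n + m + 2).factorial) *
        ((-1 : ℝ) ^ s * ((n + 2).choose s : ℝ) * (((n - s) + m + 1).choose (m + 1) : ℝ)) := by
    intro s hs
    simp only [Finset.mem_range] at hs
    have hs' : s ≤ n := by omega
    have A : (n.choose (n - s) : ℝ) = (n.choose s : ℝ) := by
      exact_mod_cast congrArg (Nat.cast : ℕ → ℝ) (Nat.choose_symm hs')
    have B : (n.choose s : ℝ) * s.factorial * (n - s).factorial = n.factorial := by
      exact_mod_cast Nat.choose_mul_factorial_mul_factorial hs'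
    have Csub : ((n - s) + m + 1) - (m + 1) = n - s := by omega
    have C : (((n - s) + m + 1).choose (m + 1) : ℝ) * (m + 1).factorial *
        (n - s).factorial = ((n - s) + m + 1).factorial := by
      have := Nat.choose_mul_factorial_mul_factorial
        (show m + 1 ≤ (n - s) + m + 1 by omega)
      rw [Csub] at this
      exact_mod_cast this
    rw [A, ← C, ← B]
    ring
  rw [Finset.sum_congr rfl e, ← Finset.mul_sum, sigma_pos n m h1 h2, mul_zero]

lemma Mint_zero (n : ℕ) :
    Mint n 0 = (-1 : ℝ) ^ n * (4 * n.factorial / (n + 2).factorial) := by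
  rw [Mint_eq]
  have e : ∀ s ∈ range (n + 1),
      (n.choose (n - s) : ℝ) * ((n + 2).choose s : ℝ) *
        (4 * (-1 : ℝ) ^ s * s.factorial * ((n - s) + 0 + 1).factorial /
          (n + 0 + 2).factorial)
      = (4 * (n.factorial : ℝ) / (n + 2).factorial) *
        ((-1 : ℝ) ^ s * ((n + 2).choose s : ℝ) * ((n : ℝ) + 1 - s)) := by
    intro s hs
    simp only [Finset.mem_range] at hs
    have hs' : s ≤ n := by omega
    have A : (n.choose (n - s) : ℝ) = (n.choose s : ℝ) := by
      exact_mod_cast congrArg (Nat.cast : ℕ → ℝ) (Nat.choose_symm hs')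
    have B : (n.choose s : ℝ) * s.factorial * (n - s).factorial = n.factorial := by
      exact_mod_cast Nat.choose_mul_factorial_mul_factorial hs'
    have C : (((n - s) + 0 + 1).factorial : ℝ) = (((n - s) : ℕ) + 1) * (n - s).factorial := by
      exact_mod_cast Nat.factorial_succ ((n - s) + 0)
    have D : (((n - s) : ℕ) : ℝ) = (n : ℝ) - s := by
      exact Nat.cast_sub hs'
    have E : n + 0 + 2 = n + 2 := by omega
    rw [E, A, C, D, ← B]
    ring
  rw [Finset.sum_congr rfl e, ← Finset.mul_sum, sigma_zero n]
  ring

/-! ### Main theorem -/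

set_option maxHeartbeats 1000000 in
theorem integral_one_add_mul_jacobiP_zero_two_sq (n : ℕ) :
    ∫ t in (-1 : ℝ)..1, (1 + t) * (jacobiP 0 2 n t) ^ 2 = 2 := by
  classical
  set c : ℕ → ℕ → ℝ := fun r i =>
    (n.choose (n - r) : ℝ) * ((n + 2).choose r : ℝ) * ((-1 : ℝ) ^ (i + r) * (r.choose i : ℝ))
    with hc
  have e : ∀ t : ℝ, (1 + t) * (jacobiP 0 2 n t) ^ 2
      = ∑ r ∈ range (n + 1), ∑ i ∈ range (r + 1),
          c r i * ((1 + t) * ((t + 1) / 2) ^ ((n - r) + i) * jacobiP 0 2 n t) := by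
    intro t
    have hP : jacobiP 0 2 n t = ∑ r ∈ range (n + 1),
        (n.choose (n - r) : ℝ) * ((n + 2).choose r : ℝ) *
          ((t - 1) / 2) ^ r * ((t + 1) / 2) ^ (n - r) := by
      unfold jacobiP
      simp only [Nat.add_zero]
    have step1 : (1 + t) * (jacobiP 0 2 n t) ^ 2
        = (∑ r ∈ range (n + 1), (n.choose (n - r) : ℝ) * ((n + 2).choose r : ℝ) *
            ((t - 1) / 2) ^ r * ((t + 1) / 2) ^ (n - r)) *
          ((1 + t) * jacobiP 0 2 n t) := by
      rw [← hP]; ring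
    rw [step1, Finset.sum_mul]
    apply Finset.sum_congr rfl
    intro r hr
    have hsub : ((t - 1) / 2) = ((t + 1) / 2) - 1 := by ring
    rw [hsub, sub_pow, Finset.mul_sum, Finset.sum_mul, Finset.sum_mul]
    apply Finset.sum_congr rfl
    intro i hi
    have hpow : ((t + 1) / 2) ^ ((n - r) + i) = ((t + 1) / 2) ^ (n - r) * ((t + 1) / 2) ^ i := by
      rw [pow_add]
    rw [hc, hpow]
    simp only [one_pow]
    ring
  have hcontP := jacobiP_continuous 0 2 n
  have hint : ∀ m : ℕ, IntervalIntegrable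
      (fun t : ℝ => (1 + t) * ((t + 1) / 2) ^ m * jacobiP 0 2 n t) volume (-1) 1 := by
    intro m
    apply Continuous.intervalIntegrable
    exact ((by fun_prop : Continuous fun t : ℝ => (1 + t) * ((t + 1) / 2) ^ m)).mul hcontP
  have e2 : (∫ t in (-1 : ℝ)..1, (1 + t) * (jacobiP 0 2 n t) ^ 2)
      = ∑ r ∈ range (n + 1), ∑ i ∈ range (r + 1), c r i * Mint n ((n - r) + i) := by
    have := intervalIntegral.integral_congr (μ := volume) (a := (-1 : ℝ)) (b := (1 : ℝ))
      (f := fun t : ℝ => (1 + t) * (jacobiP 0 2 n t) ^ 2)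
      (g := fun t : ℝ => ∑ r ∈ range (n + 1), ∑ i ∈ range (r + 1),
          c r i * ((1 + t) * ((t + 1) / 2) ^ ((n - r) + i) * jacobiP 0 2 n t))
      (fun t _ => e t)
    rw [this, intervalIntegral.integral_finset_sum]
    · apply Finset.sum_congr rfl
      intro r _
      rw [intervalIntegral.integral_finset_sum]
      · apply Finset.sum_congr rfl
        intro i _
        rw [intervalIntegral.integral_const_mul]
        rfl
      · intro i _
        exact (IntervalIntegrable.const_mul (hint ((n - r) + i)) _)
    · intro r _
      apply Continuous.intervalIntegrable
      apply continuous_finset_sum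
      intro i _
      exact continuous_const.mul
        (((by fun_prop : Continuous fun t : ℝ =>
            (1 + t) * ((t + 1) / 2) ^ ((n - r) + i))).mul hcontP)
  rw [e2]
  have outer : ∀ r ∈ range (n + 1), r ≠ n →
      ∑ i ∈ range (r + 1), c r i * Mint n ((n - r) + i) = 0 := by
    intro r hr hrn
    simp only [Finset.mem_range] at hr
    apply Finset.sum_eq_zero
    intro i hi
    simp only [Finset.mem_range] at hi
    rw [Mint_pos n ((n - r) + i) (by omega) (by omega), mul_zero]
  rw [Finset.sum_eq_single_of_mem n (Finset.self_mem_range_succ n) outer]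
  have inner : ∀ i ∈ range (n + 1), i ≠ 0 → c n i * Mint n ((n - n) + i) = 0 := by
    intro i hi hi0
    simp only [Finset.mem_range] at hi
    rw [Mint_pos n ((n - n) + i) (by omega) (by omega), mul_zero]
  rw [Finset.sum_eq_single_of_mem 0 (Finset.mem_range.mpr (by omega)) inner]
  have hnn : (n - n) + 0 = 0 := by omega
  rw [hnn, Mint_zero]
  have hc0 : c n 0 = ((n + 2).choose n : ℝ) * (-1 : ℝ) ^ n := by
    rw [hc]
    simp [Nat.sub_self]
  rw [hc0]
  have key : ((n + 2).choose n : ℝ) * 2 * n.factorial = (n + 2).factorial := by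
    have h := Nat.choose_mul_factorial_mul_factorial (show n ≤ n + 2 by omega)
    have h2 : (n + 2) - n = 2 := by omega
    rw [h2] at h
    have : (n + 2).choose n * n.factorial * 2 = (n + 2).factorial := by
      simpa [Nat.factorial] using h
    exact_mod_cast by
      have := congrArg (Nat.cast : ℕ → ℝ) this
      push_cast at this
      linarith
  have hfne : ((n + 2).factorial : ℝ) ≠ 0 := by
    exact_mod_cast (n + 2).factorial_ne_zero
  have hsq : (-1 : ℝ) ^ n * (-1 : ℝ) ^ n = 1 := by
    rw [← mul_pow]; norm_num
  field_simp
  nlinarith [key, hsq]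
end

section
/- For all n ≥ 0, the integral over [-1,1] of P_n^{(0,2)}(t) dt equals 2·(-1)^n. -/
open MeasureTheory intervalIntegral Finset

lemma Jint (a b : ℕ) : ∫ t in (-1:ℝ)..1, ((t+1)/2)^a * ((t-1)/2)^b
    = 2 * (-1:ℝ)^b * (a.factorial : ℝ) * (b.factorial : ℝ) / ((a+b+1).factorial : ℝ) := by
  induction b generalizing a with
  | zero =>
    have hv : ∀ t ∈ Set.uIcc (-1:ℝ) 1,
        HasDerivAt (fun t : ℝ => ((t+1)/2)^(a+1) * (2/((a:ℝ)+1))) (((t+1)/2)^a) t := by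
      intro t _
      have h := ((((hasDerivAt_id t).add_const 1).div_const 2).pow (a+1)).mul_const (2/((a:ℝ)+1))
      refine h.congr_deriv ?_
      simp only [id_eq]
      have ha : ((a:ℝ)+1) ≠ 0 := by positivity
      push_cast
      field_simp
    simp only [pow_zero, mul_one]
    rw [intervalIntegral.integral_eq_sub_of_hasDerivAt hv (by
      apply Continuous.intervalIntegrable; fun_prop)]
    have ha : ((a:ℝ)+1) ≠ 0 := by positivity
    simp [Nat.factorial_succ]
    field_simp
  | succ b ih =>
    have ha : ((a:ℝ)+1) ≠ 0 := by positivity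
    have hu : ∀ t ∈ Set.uIcc (-1:ℝ) 1,
        HasDerivAt (fun t : ℝ => ((t-1)/2)^(b+1)) ((((b:ℝ)+1)/2) * ((t-1)/2)^b) t := by
      intro t _
      have h := (((hasDerivAt_id t).sub_const 1).div_const 2).pow (b+1)
      refine h.congr_deriv ?_
      simp only [id_eq]
      push_cast
      ring
    have hv : ∀ t ∈ Set.uIcc (-1:ℝ) 1,
        HasDerivAt (fun t : ℝ => ((t+1)/2)^(a+1) * (2/((a:ℝ)+1))) (((t+1)/2)^a) t := by
      intro t _
      have h := ((((hasDerivAt_id t).add_const 1).div_const 2).pow (a+1)).mul_const (2/((a:ℝ)+1))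
      refine h.congr_deriv ?_
      simp only [id_eq]
      push_cast
      field_simp
    have key := intervalIntegral.integral_mul_deriv_eq_deriv_mul hu hv
      (by apply Continuous.intervalIntegrable; fun_prop)
      (by apply Continuous.intervalIntegrable; fun_prop)
    have hcomm : (∫ t in (-1:ℝ)..1, ((t+1)/2)^a * ((t-1)/2)^(b+1))
        = ∫ t in (-1:ℝ)..1, ((t-1)/2)^(b+1) * ((t+1)/2)^a := by
      congr 1; ext t; ring
    rw [hcomm, key]
    have hpull : (∫ t in (-1:ℝ)..1, (((b:ℝ)+1)/2) * ((t-1)/2)^b * (((t+1)/2)^(a+1) * (2/((a:ℝ)+1))))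
        = ((((b:ℝ)+1)/2) * (2/((a:ℝ)+1))) * ∫ t in (-1:ℝ)..1, ((t+1)/2)^(a+1) * ((t-1)/2)^b := by
      rw [← intervalIntegral.integral_const_mul]
      congr 1; ext t; ring
    rw [hpull, ih (a+1)]
    have h1 : ((1:ℝ)-1)/2 = 0 := by norm_num
    have h2 : ((-1:ℝ)+1)/2 = 0 := by norm_num
    rw [h1, h2]
    simp only [zero_pow (Nat.succ_ne_zero b), zero_pow (Nat.succ_ne_zero a)]
    have hfac : ((a+1+b+1).factorial : ℝ) ≠ 0 := by positivity
    have heq : a+1+b+1 = a+(b+1)+1 := by ring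
    rw [heq] at *
    push_cast [Nat.factorial_succ]
    field_simp
    ring

lemma altsum (n : ℕ) : ∑ s ∈ Finset.range (n+1), (-1:ℝ)^s * ((n+2).choose s : ℝ)
    = (-1:ℝ)^n * ((n:ℝ)+1) := by
  have h := add_pow (-1:ℝ) 1 (n+2)
  simp only [neg_add_cancel, one_pow, mul_one] at h
  rw [zero_pow (by omega)] at h
  rw [show n+2+1 = (n+1)+1+1 by ring, Finset.sum_range_succ, Finset.sum_range_succ] at h
  rw [Nat.choose_self, Nat.choose_succ_self_right] at h
  push_cast at h
  linear_combination -h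

theorem integral_jacobiP_zero_two (n : ℕ) :
    ∫ t in (-1 : ℝ)..1, jacobiP 0 2 n t = 2 * (-1 : ℝ) ^ n := by
  simp only [jacobiP]
  rw [intervalIntegral.integral_finset_sum
    (f := fun (s : ℕ) (x : ℝ) => (Nat.choose (n+0) (n-s):ℝ) * (Nat.choose (n+2) s:ℝ) *
      ((x-1)/2)^s * ((x+1)/2)^(n-s))
    (fun s _ => by apply Continuous.intervalIntegrable; fun_prop)]
  have hterm : ∀ s ∈ Finset.range (n+1),
      (∫ x in (-1:ℝ)..1, (Nat.choose (n+0) (n-s):ℝ) * (Nat.choose (n+2) s:ℝ) *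
        ((x-1)/2)^s * ((x+1)/2)^(n-s))
      = 2/((n:ℝ)+1) * ((-1)^s * (Nat.choose (n+2) s : ℝ)) := by
    intro s hs
    have hsn : s ≤ n := Nat.lt_succ_iff.mp (Finset.mem_range.mp hs)
    have hpull : (∫ x in (-1:ℝ)..1, (Nat.choose (n+0) (n-s):ℝ) * (Nat.choose (n+2) s:ℝ) *
          ((x-1)/2)^s * ((x+1)/2)^(n-s))
        = ((Nat.choose (n+0) (n-s):ℝ) * (Nat.choose (n+2) s:ℝ)) *
          ∫ x in (-1:ℝ)..1, ((x+1)/2)^(n-s) * ((x-1)/2)^s := by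
      rw [← intervalIntegral.integral_const_mul]
      congr 1; ext x; ring
    rw [hpull, Jint, Nat.sub_add_cancel hsn, Nat.add_zero, Nat.choose_symm hsn]
    have h1 : (n.choose s : ℝ) * s.factorial * (n-s).factorial = n.factorial := by
      exact_mod_cast Nat.choose_mul_factorial_mul_factorial hsn
    have h2 : ((n+1).factorial : ℝ) = ((n:ℝ)+1) * n.factorial := by
      push_cast [Nat.factorial_succ]; ring
    have hne : ((n:ℝ)+1) ≠ 0 := by positivity
    have hfn : (n.factorial : ℝ) ≠ 0 := by positivity
    rw [h2]
    field_simp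
    linear_combination (Nat.choose (n+2) s : ℝ) * h1
  rw [Finset.sum_congr rfl hterm, ← Finset.mul_sum, altsum]
  have hne : ((n:ℝ)+1) ≠ 0 := by positivity
  field_simp
end

section
/- For all n ≥ 0, the integral over [-1,1] of (1-t)·P_n^{(1,1)}(t) dt equals (-1)^n·4/(n+2). -/
open MeasureTheory intervalIntegral Finset

lemma beta_nat (a b : ℕ) : ∫ x in (0:ℝ)..1, x ^ a * (1 - x) ^ b
    = (Nat.factorial a * Nat.factorial b) / Nat.factorial (a + b + 1) := by
  induction b generalizing a with
  | zero =>
    simp only [pow_zero, mul_one, integral_pow]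
    have : ((a:ℝ) + 1) ≠ 0 := by positivity
    rw [Nat.add_comm a 0, Nat.zero_add, Nat.factorial_succ]
    push_cast
    have hfa : (Nat.factorial a : ℝ) ≠ 0 := by positivity
    field_simp
    simp
  | succ b ih =>
    have hb : ∀ x ∈ Set.uIcc (0:ℝ) 1, HasDerivAt (fun x : ℝ => (1 - x) ^ (b + 1))
        (-(b + 1) * (1 - x) ^ b) x := by
      intro x _
      have := ((hasDerivAt_id x).const_sub 1).pow (b + 1)
      refine this.congr_deriv ?_
      simp only [id]
      push_cast; ring
    have hv : ∀ x ∈ Set.uIcc (0:ℝ) 1, HasDerivAt (fun x : ℝ => x ^ (a + 1) / (a + 1))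
        (x ^ a) x := by
      intro x _
      have := (hasDerivAt_pow (a + 1) x).div_const (a + 1)
      have h1 : ((a:ℝ) + 1) ≠ 0 := by positivity
      refine this.congr_deriv ?_
      field_simp
      simp
    have key := intervalIntegral.integral_mul_deriv_eq_deriv_mul hb hv
      (by apply Continuous.intervalIntegrable; continuity)
      (by apply Continuous.intervalIntegrable; continuity)
    have e1 : ∫ x in (0:ℝ)..1, x ^ a * (1 - x) ^ (b + 1)
        = ∫ x in (0:ℝ)..1, (1 - x) ^ (b + 1) * x ^ a := by
      congr 1; ext x; ring
    rw [e1, key]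
    have e2 : ∫ x in (0:ℝ)..1, -((b:ℝ) + 1) * (1 - x) ^ b * (x ^ (a + 1) / (a + 1))
        = (-((b:ℝ) + 1) / (a + 1)) * ∫ x in (0:ℝ)..1, x ^ (a + 1) * (1 - x) ^ b := by
      rw [← intervalIntegral.integral_const_mul]
      congr 1; ext x; ring
    rw [e2, ih (a + 1)]
    have h1 : ((a:ℝ) + 1) ≠ 0 := by positivity
    have h2 : (Nat.factorial (a + 1 + b + 1) : ℝ) ≠ 0 := by positivity
    have h3 : (Nat.factorial (a + (b + 1) + 1) : ℝ) ≠ 0 := by positivity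
    have hfa : (Nat.factorial (a + 1) : ℝ) = (a + 1) * Nat.factorial a := by
      rw [Nat.factorial_succ]; push_cast; ring
    have hfb : (Nat.factorial (b + 1) : ℝ) = (b + 1) * Nat.factorial b := by
      rw [Nat.factorial_succ]; push_cast; ring
    have hfe : a + (b + 1) + 1 = a + 1 + b + 1 := by ring
    rw [hfe, hfa, hfb]
    simp only [one_pow, zero_pow, Nat.succ_ne_zero]
    field_simp
    ring

lemma shifted (a b : ℕ) : ∫ t in (-1:ℝ)..1, ((t - 1) / 2) ^ a * ((t + 1) / 2) ^ b
    = 2 * (-1 : ℝ) ^ a * (Nat.factorial a * Nat.factorial b) / Nat.factorial (a + b + 1) := by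
  have h := intervalIntegral.integral_comp_mul_add
    (f := fun x : ℝ => (x - 1) ^ a * x ^ b) (a := (-1:ℝ)) (b := 1)
    (c := (1/2 : ℝ)) (by norm_num) (1/2 : ℝ)
  have e1 : ∀ t : ℝ, ((t - 1) / 2) ^ a * ((t + 1) / 2) ^ b
      = ((1/2 * t + 1/2) - 1) ^ a * (1/2 * t + 1/2) ^ b := by
    intro t; ring_nf
  have e2 : (∫ t in (-1:ℝ)..1, ((t - 1) / 2) ^ a * ((t + 1) / 2) ^ b)
      = ∫ t in (-1:ℝ)..1, ((1/2 * t + 1/2 : ℝ) - 1) ^ a * (1/2 * t + 1/2) ^ b := by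
    congr 1; ext t; exact e1 t
  rw [e2, h]
  norm_num
  have e3 : (∫ x in (0:ℝ)..1, (x - 1) ^ a * x ^ b)
      = (-1:ℝ)^a * ∫ x in (0:ℝ)..1, x ^ b * (1 - x) ^ a := by
    rw [← intervalIntegral.integral_const_mul]
    congr 1; ext x
    have : (x - 1 : ℝ) ^ a = (-1)^a * (1-x)^a := by
      rw [← neg_pow, neg_sub]
    rw [this]; ring
  rw [e3, beta_nat b a]
  rw [show b + a + 1 = a + b + 1 by ring]
  ring

theorem integral_one_sub_mul_jacobiP_one_one (n : ℕ) :
    ∫ t in (-1 : ℝ)..1, (1 - t) * jacobiP 1 1 n t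
      = (-1 : ℝ) ^ n * 4 / ((n : ℝ) + 2) := by
  have e : ∀ t : ℝ, (1 - t) * jacobiP 1 1 n t
      = ∑ s ∈ Finset.range (n + 1),
          (-2 * (Nat.choose (n + 1) (n - s) : ℝ) * (Nat.choose (n + 1) s : ℝ)) *
            (((t - 1) / 2) ^ (s + 1) * ((t + 1) / 2) ^ (n - s)) := by
    intro t
    unfold jacobiP
    rw [Finset.mul_sum]
    refine Finset.sum_congr rfl fun s _ => ?_
    rw [pow_succ]
    ring
  rw [intervalIntegral.integral_congr (fun t _ => e t)]
  rw [intervalIntegral.integral_finset_sum (fun s _ => by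
    apply Continuous.intervalIntegrable; continuity)]
  have step : ∀ s ∈ Finset.range (n + 1),
      (∫ t in (-1:ℝ)..1,
        (-2 * (Nat.choose (n + 1) (n - s) : ℝ) * (Nat.choose (n + 1) s : ℝ)) *
          (((t - 1) / 2) ^ (s + 1) * ((t + 1) / 2) ^ (n - s)))
      = (4 / ((n:ℝ) + 2)) * ((-1:ℝ) ^ s * (Nat.choose (n + 1) s : ℝ)) := by
    intro s hs
    have hsn : s ≤ n := Nat.lt_succ_iff.mp (Finset.mem_range.mp hs)
    rw [intervalIntegral.integral_const_mul, shifted (s+1) (n-s)]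
    have hexp : s + 1 + (n - s) + 1 = n + 2 := by omega
    rw [hexp]
    have hch : (Nat.choose (n + 1) (n - s) : ℝ) * (Nat.factorial (n - s)) *
        (Nat.factorial (s + 1)) = Nat.factorial (n + 1) := by
      have h2 : n - s ≤ n + 1 := by omega
      have := Nat.choose_mul_factorial_mul_factorial h2
      have h3 : n + 1 - (n - s) = s + 1 := by omega
      rw [h3] at this
      exact_mod_cast congrArg (Nat.cast : ℕ → ℝ) this
    have hf2 : (Nat.factorial (n + 2) : ℝ) = ((n:ℝ) + 2) * Nat.factorial (n + 1) := by
      rw [Nat.factorial_succ]; push_cast; ring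
    have hne : ((n:ℝ) + 2) ≠ 0 := by positivity
    have hne2 : (Nat.factorial (n + 1) : ℝ) ≠ 0 := by positivity
    rw [hf2]
    rw [pow_succ]
    field_simp
    linear_combination (4 * ((Nat.choose (n + 1) s : ℝ))) * hch
  rw [Finset.sum_congr rfl step, ← Finset.mul_sum]
  have hsum : ∑ s ∈ Finset.range (n + 1), (-1:ℝ) ^ s * (Nat.choose (n + 1) s : ℝ)
      = (-1:ℝ) ^ n := by
    have hz := Int.alternating_sum_range_choose (n := n + 1)
    simp only [Nat.succ_ne_zero, if_false] at hz
    rw [Finset.sum_range_succ] at hz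
    have h4 : (∑ i ∈ Finset.range (n + 1), (-1:ℤ) ^ i * ((n+1).choose i : ℤ))
        = -((-1:ℤ) ^ (n+1) * ((n+1).choose (n+1) : ℤ)) := by linarith
    have h5 := congrArg (Int.cast : ℤ → ℝ) h4
    push_cast at h5
    rw [h5]
    simp [pow_succ]
  rw [hsum]
  ring
end

section
/- Let n ≥ 1 and let α_1, ..., α_{n+1} be real numbers with sin(α_i) ≠ 0 for all i. Let T_n be the symmetric tridiagonal n×n matrix with diagonal entries (T_n)_{ii} = sin(α_i + α_{i+1})/(sin α_i · sin α_{i+1}) and off-diagonal entries (T_n)_{i,i+1} = (T_n)_{i+1,i} = 1/sin α_{i+1}. Then det T_n = sin(α_1 + ... + α_{n+1}) / (sin α_1 · sin α_2 · ... · sin α_{n+1}). -/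
open Real Finset

lemma trig_key (a b S : ℝ) :
    Real.sin (a + b) * Real.sin (S - a) - Real.sin a * Real.sin (S - a - b) =
      Real.sin b * Real.sin S := by
  have h3 : Real.sin b = Real.sin (a + b) * Real.cos a - Real.cos (a + b) * Real.sin a := by
    have := Real.sin_sub (a + b) a
    rw [show a + b - a = b by ring] at this
    linarith
  rw [Real.sin_sub S a, show S - a - b = S - (a + b) by ring, Real.sin_sub S (a + b)]
  linear_combination -Real.sin S * h3

lemma trig_key' (a b S2 : ℝ) :
    Real.sin (a + b) * Real.sin (b + S2) - Real.sin a * Real.sin S2 =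
      Real.sin b * Real.sin (a + (b + S2)) := by
  have := trig_key a b (a + (b + S2))
  rw [show a + (b + S2) - a = b + S2 by ring,
    show b + S2 - b = S2 by ring] at this
  linarith

lemma alg_key (a b S2 P2 : ℝ) (h0 : Real.sin a ≠ 0) (h1 : Real.sin b ≠ 0) (hP : P2 ≠ 0) :
    Real.sin (a + b) / (Real.sin a * Real.sin b) * (Real.sin (b + S2) / (Real.sin b * P2)) +
      -(1 / Real.sin b * (1 / Real.sin b * (Real.sin S2 / P2))) =
    Real.sin (a + (b + S2)) / (Real.sin a * (Real.sin b * P2)) := by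
  have key := trig_key' a b S2
  field_simp
  linear_combination key

lemma aux_det (n : ℕ) (α : Fin (n + 1) → ℝ)
    (hα : ∀ i, Real.sin (α i) ≠ 0)
    (T : Matrix (Fin n) (Fin n) ℝ)
    (hdiag : ∀ i : Fin n,
      T i i = Real.sin (α i.castSucc + α i.succ) /
        (Real.sin (α i.castSucc) * Real.sin (α i.succ)))
    (hup : ∀ i j : Fin n, (i : ℕ) + 1 = (j : ℕ) →
      T i j = 1 / Real.sin (α j.castSucc))
    (hlow : ∀ i j : Fin n, (j : ℕ) + 1 = (i : ℕ) →
      T i j = 1 / Real.sin (α i.castSucc))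
    (hzero : ∀ i j : Fin n, (i : ℕ) + 1 < (j : ℕ) ∨ (j : ℕ) + 1 < (i : ℕ) →
      T i j = 0) :
    T.det = Real.sin (∑ i, α i) / ∏ i, Real.sin (α i) := by
  induction n using Nat.strong_induction_on with
  | _ n ih =>
  match n, α, T, hα, hdiag, hup, hlow, hzero, ih with
  | 0, α, T, hα, hdiag, hup, hlow, hzero, ih =>
    simp [Matrix.det_fin_zero, div_self (hα 0)]
  | 1, α, T, hα, hdiag, hup, hlow, hzero, ih =>
    rw [Matrix.det_fin_one, hdiag 0, Fin.sum_univ_two, Fin.prod_univ_two]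
    norm_num
  | (m + 2), α, T, hα, hdiag, hup, hlow, hzero, ih =>
    -- shifted angle sequences
    set α' : Fin (m + 2) → ℝ := fun i => α i.succ with hα'
    set α'' : Fin (m + 1) → ℝ := fun i => α i.succ.succ with hα''
    set M0 : Matrix (Fin (m + 1)) (Fin (m + 1)) ℝ := T.submatrix Fin.succ Fin.succ with hM0
    set M2 : Matrix (Fin m) (Fin m) ℝ :=
      T.submatrix (fun i => i.succ.succ) (fun j => j.succ.succ) with hM2
    have hdet0 : M0.det = Real.sin (∑ i, α' i) / ∏ i, Real.sin (α' i) := by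
      apply ih (m + 1) (by omega)
      · intro i; exact hα _
      · intro i
        simp only [hM0, Matrix.submatrix_apply]
        rw [hdiag i.succ]
        simp [hα', ← Fin.succ_castSucc]
      · intro i j h
        simp only [hM0, Matrix.submatrix_apply]
        rw [hup i.succ j.succ (by simp [Fin.val_succ]; omega)]
        simp [hα', ← Fin.succ_castSucc]
      · intro i j h
        simp only [hM0, Matrix.submatrix_apply]
        rw [hlow i.succ j.succ (by simp [Fin.val_succ]; omega)]
        simp [hα', ← Fin.succ_castSucc]
      · intro i j h
        simp only [hM0, Matrix.submatrix_apply]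
        exact hzero i.succ j.succ (by simp only [Fin.val_succ]; omega)
    have hdet2 : M2.det = Real.sin (∑ i, α'' i) / ∏ i, Real.sin (α'' i) := by
      apply ih m (by omega)
      · intro i; exact hα _
      · intro i
        simp only [hM2, Matrix.submatrix_apply]
        rw [hdiag i.succ.succ]
        simp [hα'', ← Fin.succ_castSucc]
      · intro i j h
        simp only [hM2, Matrix.submatrix_apply]
        rw [hup i.succ.succ j.succ.succ (by simp [Fin.val_succ]; omega)]
        simp [hα'', ← Fin.succ_castSucc]
      · intro i j h
        simp only [hM2, Matrix.submatrix_apply]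
        rw [hlow i.succ.succ j.succ.succ (by simp [Fin.val_succ]; omega)]
        simp [hα'', ← Fin.succ_castSucc]
      · intro i j h
        simp only [hM2, Matrix.submatrix_apply]
        exact hzero i.succ.succ j.succ.succ (by simp only [Fin.val_succ]; omega)
    -- expansion along column 0
    rw [Matrix.det_succ_column_zero (n := m + 1), Fin.sum_univ_succ, Fin.sum_univ_succ]
    have hrest : ∀ i : Fin m,
        (-1 : ℝ) ^ ((i.succ.succ : Fin (m + 2)) : ℕ) * T i.succ.succ 0 *
          (T.submatrix (i.succ.succ).succAbove Fin.succ).det = 0 := by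
      intro i
      rw [hzero i.succ.succ 0 (by simp only [Fin.val_succ, Fin.val_zero]; omega)]
      ring
    rw [Finset.sum_congr rfl fun i _ => hrest i, Finset.sum_const_zero]
    -- the i = 0 minor is M0
    have e0 : T.submatrix ((0 : Fin (m + 2)).succAbove) Fin.succ = M0 := by
      rw [Fin.succAbove_zero]
    -- the i = 1 term
    have e1 : (T.submatrix ((0 : Fin (m + 1)).succ.succAbove) Fin.succ).det =
        T 0 1 * M2.det := by
      rw [Matrix.det_succ_row_zero (n := m), Fin.sum_univ_succ]
      have hrest1 : ∀ j : Fin m,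
          (-1 : ℝ) ^ ((j.succ : Fin (m + 1)) : ℕ) *
            (T.submatrix ((0 : Fin (m + 1)).succ.succAbove) Fin.succ) 0 j.succ *
            ((T.submatrix ((0 : Fin (m + 1)).succ.succAbove) Fin.succ).submatrix
              Fin.succ j.succ.succAbove).det = 0 := by
        intro j
        have : (T.submatrix ((0 : Fin (m + 1)).succ.succAbove) Fin.succ) 0 j.succ = 0 := by
          simp only [Matrix.submatrix_apply, Fin.succ_succAbove_zero]
          exact hzero 0 j.succ.succ (by simp only [Fin.val_succ, Fin.val_zero]; omega)
        rw [this]; ring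
      rw [Finset.sum_congr rfl fun j _ => hrest1 j, Finset.sum_const_zero, add_zero]
      have h00 : (T.submatrix ((0 : Fin (m + 1)).succ.succAbove) Fin.succ) 0 0 = T 0 1 := by
        simp only [Matrix.submatrix_apply, Fin.succ_succAbove_zero]
        congr 1
      have hsub : (T.submatrix ((0 : Fin (m + 1)).succ.succAbove) Fin.succ).submatrix
          Fin.succ ((0 : Fin (m + 1)).succAbove) = M2 := by
        ext i j
        simp [hM2, Matrix.submatrix_apply, Fin.succ_succAbove_succ, Fin.zero_succAbove]
      rw [h00, hsub]
      simp
    rw [e0, e1]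
    -- compute entries
    have hT00 : T 0 0 = Real.sin (α 0 + α 1) / (Real.sin (α 0) * Real.sin (α 1)) := by
      rw [hdiag 0]; norm_num
    have hT10 : T (Fin.succ 0) 0 = 1 / Real.sin (α 1) := by
      have hc : ((Fin.succ 0 : Fin (m + 2))).castSucc = (1 : Fin (m + 3)) :=
        Fin.ext (by simp [Fin.val_one])
      rw [hlow (Fin.succ 0) 0 (by simp), hc]
    have hT01 : T 0 1 = 1 / Real.sin (α 1) := by
      rw [hup 0 1 (by norm_num)]
      norm_num
    -- sums and products
    have hS : ∑ i, α i = α 0 + (α 1 + ∑ i, α'' i) := by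
      rw [Fin.sum_univ_succ, Fin.sum_univ_succ]
      simp [hα'']
    have hS1 : ∑ i, α' i = α 1 + ∑ i, α'' i := by
      rw [Fin.sum_univ_succ]
      simp [hα', hα'']
    have hP : ∏ i, Real.sin (α i) =
        Real.sin (α 0) * (Real.sin (α 1) * ∏ i, Real.sin (α'' i)) := by
      rw [Fin.prod_univ_succ, Fin.prod_univ_succ]
      simp [hα'']
    have hP1 : ∏ i, Real.sin (α' i) = Real.sin (α 1) * ∏ i, Real.sin (α'' i) := by
      rw [Fin.prod_univ_succ]
      simp [hα', hα'']
    have hval1 : ((0 : Fin (m + 1)).succ : Fin (m + 2)).val = 1 := rfl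
    have hPne : (∏ i, Real.sin (α'' i)) ≠ 0 := Finset.prod_ne_zero_iff.mpr fun i _ => hα _
    have hs0 := hα 0
    have hs1 := hα 1
    rw [hdet0, hdet2, hT00, hT10, hT01, hS, hS1, hP, hP1]
    simp only [Fin.val_zero, pow_zero, one_mul, Fin.val_succ, zero_add, pow_one, add_zero,
      neg_mul, neg_one_mul]
    linear_combination alg_key (α 0) (α 1) (∑ i, α'' i) (∏ i, Real.sin (α'' i)) hs0 hs1 hPne

theorem det_tridiagonal_sin (n : ℕ) (hn : 1 ≤ n) (α : Fin (n + 1) → ℝ)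
    (hα : ∀ i, Real.sin (α i) ≠ 0)
    (T : Matrix (Fin n) (Fin n) ℝ)
    (hdiag : ∀ i : Fin n,
      T i i = Real.sin (α i.castSucc + α i.succ) /
        (Real.sin (α i.castSucc) * Real.sin (α i.succ)))
    (hup : ∀ i j : Fin n, (i : ℕ) + 1 = (j : ℕ) →
      T i j = 1 / Real.sin (α j.castSucc))
    (hlow : ∀ i j : Fin n, (j : ℕ) + 1 = (i : ℕ) →
      T i j = 1 / Real.sin (α i.castSucc))
    (hzero : ∀ i j : Fin n, (i : ℕ) + 1 < (j : ℕ) ∨ (j : ℕ) + 1 < (i : ℕ) →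
      T i j = 0) :
    T.det = Real.sin (∑ i, α i) / ∏ i, Real.sin (α i) := by
  exact aux_det n α hα T hdiag hup hlow hzero
end

section
/- Let p ≥ 1 be odd and K̂ the unit reference triangle. Then ∫_{K̂} P_{p-1}^{(0,2)}(1 − 2λ̂_1(x)) · (d/ds P_p^{(0,0)})(1 − 2λ̂_2(x)) dx = (−1)^{p-1}·|K̂| = 1/2, where λ̂_1, λ̂_2 are the barycentric coordinates for the first two vertices. -/
open MeasureTheory Finset
open Polynomial

noncomputable def jacobiPoly (a b n : ℕ) : Polynomial ℝ :=
  ∑ s ∈ Finset.range (n + 1),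
    Polynomial.C ((Nat.choose (n + a) (n - s) : ℝ) * (Nat.choose (n + b) s : ℝ) / 2 ^ n) *
      (Polynomial.X - 1) ^ s * (Polynomial.X + 1) ^ (n - s)

lemma jacobiP_eq_eval (a b n : ℕ) (x : ℝ) : jacobiP a b n x = (jacobiPoly a b n).eval x := by
  unfold jacobiP jacobiPoly
  rw [Polynomial.eval_finset_sum]
  refine Finset.sum_congr rfl fun s hs => ?_
  have hsle : s ≤ n := Nat.lt_succ_iff.mp (Finset.mem_range.mp hs)
  simp only [Polynomial.eval_mul, Polynomial.eval_C, Polynomial.eval_pow, Polynomial.eval_sub,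
    Polynomial.eval_add, Polynomial.eval_X, Polynomial.eval_one]
  have h2 : (2:ℝ)^s * 2^(n-s) = 2^n := by
    rw [← pow_add]; congr 1; omega
  have key : ((x-1)/2)^s * ((x+1)/2)^(n-s) = (x-1)^s * (x+1)^(n-s) / 2^n := by
    rw [div_pow, div_pow, div_mul_div_comm, h2]
  rw [mul_assoc, key]; ring

lemma eval_jacobiPoly_affine (a b n : ℕ) (w : ℝ) :
    (jacobiPoly a b n).eval (2*w - 1) =
      ∑ s ∈ Finset.range (n + 1),
        (Nat.choose (n + a) (n - s) : ℝ) * (Nat.choose (n + b) s : ℝ) * (w - 1) ^ s * w ^ (n - s) := by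
  unfold jacobiPoly
  rw [Polynomial.eval_finset_sum]
  refine Finset.sum_congr rfl fun s hs => ?_
  have hsle : s ≤ n := Nat.lt_succ_iff.mp (Finset.mem_range.mp hs)
  simp only [Polynomial.eval_mul, Polynomial.eval_C, Polynomial.eval_pow, Polynomial.eval_sub,
    Polynomial.eval_add, Polynomial.eval_X, Polynomial.eval_one]
  have h2 : (2:ℝ)^s * 2^(n-s) = 2^n := by rw [← pow_add]; congr 1; omega
  have key : ((2*w-1-1)/2)^s * ((2*w-1+1)/2)^(n-s) = (w-1)^s * w^(n-s) := by
    rw [show (2*w-1-1)/2 = w - 1 by ring, show (2*w-1+1)/2 = w by ring]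
  calc _ = (↑((n + a).choose (n - s)) * ↑((n + b).choose s) / 2 ^ n) * ((2*w-1-1)^s * (2*w-1+1)^(n-s)) := by ring
    _ = (↑((n + a).choose (n - s)) * ↑((n + b).choose s) / 2 ^ n) * (((2*w-1-1)/2)^s * ((2*w-1+1)/2)^(n-s) * 2^n) := by
        rw [div_pow, div_pow]; rw [div_mul_div_comm, h2]; field_simp
    _ = _ := by rw [key]; field_simp

lemma natDegree_jacobiPoly_le (a b n : ℕ) : (jacobiPoly a b n).natDegree ≤ n := by
  unfold jacobiPoly
  refine (Polynomial.natDegree_sum_le _ _).trans ?_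
  rw [Finset.fold_max_le]
  refine ⟨Nat.zero_le _, fun s hs => ?_⟩
  have hsle : s ≤ n := Nat.lt_succ_iff.mp (Finset.mem_range.mp hs)
  refine (Polynomial.natDegree_mul_le).trans ?_
  have h1 : ((Polynomial.C ((Nat.choose (n + a) (n - s) : ℝ) * (Nat.choose (n + b) s : ℝ) / 2 ^ n)) *
      (Polynomial.X - 1) ^ s : Polynomial ℝ).natDegree ≤ s := by
    refine (Polynomial.natDegree_mul_le).trans ?_
    simp only [Polynomial.natDegree_C, zero_add]
    refine (Polynomial.natDegree_pow_le).trans ?_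
    have : ((Polynomial.X - 1 : Polynomial ℝ)).natDegree ≤ 1 := by
      refine (Polynomial.natDegree_sub_le _ _).trans (by simp)
    calc s * (Polynomial.X - 1 : Polynomial ℝ).natDegree ≤ s * 1 := by
          exact Nat.mul_le_mul_left s this
      _ = s := Nat.mul_one s
  have h2 : (((Polynomial.X + 1) ^ (n - s) : Polynomial ℝ)).natDegree ≤ n - s := by
    refine (Polynomial.natDegree_pow_le).trans ?_
    have : ((Polynomial.X + 1 : Polynomial ℝ)).natDegree ≤ 1 := by
      refine (Polynomial.natDegree_add_le _ _).trans (by simp)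
    calc (n-s) * (Polynomial.X + 1 : Polynomial ℝ).natDegree ≤ (n-s) * 1 :=
          Nat.mul_le_mul_left _ this
      _ = n - s := Nat.mul_one _
  omega

noncomputable def antider (q : Polynomial ℝ) : Polynomial ℝ :=
  q.sum fun k a => Polynomial.C (a / (k+1)) * Polynomial.X ^ (k+1)

lemma antider_derivative (q : Polynomial ℝ) : (antider q).derivative = q := by
  unfold antider
  rw [Polynomial.sum, map_sum]
  have : ∀ k ∈ q.support,
      ((Polynomial.C (q.coeff k / (k+1)) * Polynomial.X ^ (k+1)).derivative : Polynomial ℝ)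
        = Polynomial.C (q.coeff k) * Polynomial.X ^ k := by
    intro k _
    rw [Polynomial.derivative_C_mul_X_pow, Nat.add_sub_cancel]
    congr 1
    push_cast
    have : ((k:ℝ)+1) ≠ 0 := by positivity
    field_simp
  rw [Finset.sum_congr rfl this]
  exact Polynomial.sum_C_mul_X_pow_eq q

lemma integral_poly_eval (q : Polynomial ℝ) (a b : ℝ) :
    ∫ t in a..b, q.eval t = (antider q).eval b - (antider q).eval a := by
  refine intervalIntegral.integral_eq_sub_of_hasDerivAt (f := fun t => (antider q).eval t) (f' := fun t => q.eval t) ?_ ?_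
  · intro x _
    have h := (antider q).hasDerivAt x
    rwa [antider_derivative] at h
  · exact (q.continuous_aeval).intervalIntegrable _ _

lemma beta_integral (s m : ℕ) :
    ∫ w in (0:ℝ)..1, (w-1)^s * w^m
      = (-1)^s * ((s.factorial : ℝ) * m.factorial / (s+m+1).factorial) := by
  induction s generalizing m with
  | zero =>
      simp only [pow_zero, one_mul, Nat.factorial_zero, Nat.cast_one, Nat.zero_add]
      rw [integral_pow]
      rw [Nat.factorial_succ]
      push_cast
      rw [one_pow, zero_pow (by omega : m+1 ≠ 0)]
      have : ((m:ℝ)+1) ≠ 0 := by positivity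
      have h2 : (m.factorial : ℝ) ≠ 0 := by positivity
      field_simp
      norm_num
  | succ s ih =>
      have hderiv : ∀ w ∈ Set.uIcc (0:ℝ) 1, HasDerivAt (fun w : ℝ => (w-1)^(s+1) * w^(m+1))
          ((s+1 : ℝ) * ((w-1)^s * w^(m+1)) + (m+1:ℝ) * ((w-1)^(s+1) * w^m)) w := by
        intro w _
        have h1 : HasDerivAt (fun w : ℝ => (w-1)^(s+1)) ((s+1:ℝ)*(w-1)^s) w := by
          have := ((hasDerivAt_id w).sub_const 1).pow (s+1)
          simpa [Nat.add_sub_cancel, mul_comm, mul_assoc, mul_one, Pi.pow_def] using this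
        have h2 : HasDerivAt (fun w : ℝ => w^(m+1)) ((m+1:ℝ)*w^m) w := by
          simpa [Nat.add_sub_cancel, mul_comm] using (hasDerivAt_pow (m+1) w)
        have := h1.mul h2
        exact this.congr_deriv (by ring)
      have hint : ∫ w in (0:ℝ)..1, ((s+1 : ℝ) * ((w-1)^s * w^(m+1)) + (m+1:ℝ) * ((w-1)^(s+1) * w^m))
          = (fun w : ℝ => (w-1)^(s+1) * w^(m+1)) 1 - (fun w : ℝ => (w-1)^(s+1) * w^(m+1)) 0 := by
        refine intervalIntegral.integral_eq_sub_of_hasDerivAt hderiv ?_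
        apply Continuous.intervalIntegrable
        continuity
      simp only [one_pow, sub_self, zero_pow (Nat.succ_ne_zero s), zero_pow (Nat.succ_ne_zero m),
        mul_zero, zero_mul, sub_zero, zero_sub, neg_zero] at hint
      rw [intervalIntegral.integral_add, intervalIntegral.integral_const_mul,
        intervalIntegral.integral_const_mul, ih (m+1)] at hint
      · have hm : ((m:ℝ)+1) ≠ 0 := by positivity
        have heq : ∫ w in (0:ℝ)..1, (w-1)^(s+1) * w^m
            = -((s+1:ℝ) * ((-1)^s * ((s.factorial : ℝ) * (m+1).factorial / (s+(m+1)+1).factorial))) / ((m:ℝ)+1) := by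
          field_simp at hint ⊢
          linarith [hint]
        rw [heq]
        have h1 : (s+(m+1)+1) = ((s+1)+m+1) := by omega
        rw [h1, Nat.factorial_succ m, Nat.factorial_succ s]
        have hf : (((s+1)+m+1).factorial : ℝ) ≠ 0 := by positivity
        push_cast
        field_simp
        ring
      · apply Continuous.intervalIntegrable; continuity
      · apply Continuous.intervalIntegrable; continuity

lemma altsum_poly (p : ℕ) (f : Polynomial ℝ) (hf : f.natDegree < p) :
    ∑ s ∈ Finset.range (p+1), (-1:ℝ)^s * (p.choose s) * f.eval (s:ℝ) = 0 := by
  induction p generalizing f with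
  | zero => exact absurd hf (Nat.not_lt_zero _)
  | succ p ih =>
      set g : Polynomial ℝ := f - f.comp (Polynomial.X + 1) with hg
      have hgeval : ∀ i : ℕ, g.eval (i:ℝ) = f.eval (i:ℝ) - f.eval ((i:ℝ)+1) := by
        intro i
        simp [hg, Polynomial.eval_comp]
      have hstep : ∑ s ∈ Finset.range (p+2), (-1:ℝ)^s * ((p+1).choose s) * f.eval (s:ℝ)
          = ∑ i ∈ Finset.range (p+1), (-1:ℝ)^i * (p.choose i) * g.eval (i:ℝ) := by
        rw [Finset.sum_range_succ' _ (p+1)]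
        have hT : ∑ i ∈ Finset.range (p+2), (-1:ℝ)^i * (p.choose i) * f.eval (i:ℝ)
            = ∑ i ∈ Finset.range (p+1), (-1:ℝ)^i * (p.choose i) * f.eval (i:ℝ) := by
          rw [Finset.sum_range_succ]
          simp [Nat.choose_succ_self]
        have hT' : ∑ i ∈ Finset.range (p+2), (-1:ℝ)^i * (p.choose i) * f.eval (i:ℝ)
            = (∑ i ∈ Finset.range (p+1), (-1:ℝ)^(i+1) * (p.choose (i+1)) * f.eval ((i+1:ℕ):ℝ))
              + (p.choose 0) * f.eval ((0:ℕ):ℝ) := by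
          rw [Finset.sum_range_succ' _ (p+1)]
          norm_num
        have hchoose : ∀ i, ((p+1).choose (i+1) : ℝ) = (p.choose i : ℝ) + (p.choose (i+1) : ℝ) := by
          intro i; rw [Nat.choose_succ_succ]; push_cast; ring
        calc (∑ i ∈ Finset.range (p+1), (-1:ℝ)^(i+1) * ((p+1).choose (i+1)) * f.eval ((i+1:ℕ):ℝ))
              + (-1:ℝ)^0 * ((p+1).choose 0) * f.eval ((0:ℕ):ℝ)
            = (∑ i ∈ Finset.range (p+1), ((-1:ℝ)^(i+1) * (p.choose i) * f.eval ((i+1:ℕ):ℝ)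
                + (-1:ℝ)^(i+1) * (p.choose (i+1)) * f.eval ((i+1:ℕ):ℝ)))
              + f.eval ((0:ℕ):ℝ) := by
              simp only [hchoose]
              norm_num
              exact Finset.sum_congr rfl fun i _ => by ring
          _ = (∑ i ∈ Finset.range (p+1), (-1:ℝ)^(i+1) * (p.choose i) * f.eval ((i+1:ℕ):ℝ))
              + ((∑ i ∈ Finset.range (p+1), (-1:ℝ)^(i+1) * (p.choose (i+1)) * f.eval ((i+1:ℕ):ℝ))
                + f.eval ((0:ℕ):ℝ)) := by
              rw [Finset.sum_add_distrib]; ring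
          _ = (∑ i ∈ Finset.range (p+1), (-1:ℝ)^(i+1) * (p.choose i) * f.eval ((i+1:ℕ):ℝ))
              + ∑ i ∈ Finset.range (p+1), (-1:ℝ)^i * (p.choose i) * f.eval (i:ℝ) := by
              rw [← hT, hT', Nat.choose_zero_right]; push_cast; ring
          _ = ∑ i ∈ Finset.range (p+1), (-1:ℝ)^i * (p.choose i) * g.eval (i:ℝ) := by
              rw [← Finset.sum_add_distrib]
              refine Finset.sum_congr rfl fun i _ => ?_
              rw [hgeval i]
              push_cast
              ring
      rw [hstep]
      by_cases hg0 : g = 0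
      · simp [hg0]
      · have hf0 : f ≠ 0 := by
          intro h; apply hg0; rw [hg, h]; simp
        have hX1 : (Polynomial.X + 1 : Polynomial ℝ).natDegree = 1 := by
          simpa using Polynomial.natDegree_X_add_C (1:ℝ)
        have hX1lc : (Polynomial.X + 1 : Polynomial ℝ).leadingCoeff = 1 := by
          simpa using (Polynomial.monic_X_add_C (1:ℝ)).leadingCoeff
        have hcomp_lc : (f.comp (Polynomial.X + 1)).leadingCoeff = f.leadingCoeff := by
          rw [Polynomial.leadingCoeff_comp (by rw [hX1]; omega), hX1lc, one_pow, mul_one]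
        have hcomp_ne : f.comp (Polynomial.X + 1) ≠ 0 := by
          intro h
          apply hf0
          have := hcomp_lc
          rw [h] at this
          simp only [Polynomial.leadingCoeff_zero] at this
          exact Polynomial.leadingCoeff_eq_zero.mp this.symm
        have hdeg_eq : (f.comp (Polynomial.X + 1)).degree = f.degree := by
          rw [Polynomial.degree_eq_natDegree hcomp_ne, Polynomial.degree_eq_natDegree hf0,
            Polynomial.natDegree_comp, hX1, mul_one]
        have hdlt : g.degree < f.degree := by
          rw [hg]
          exact Polynomial.degree_sub_lt hdeg_eq.symm hf0 hcomp_lc.symm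
        have hglt : g.natDegree < p := by
          have h1 : g.degree < (p : WithBot ℕ) := by
            refine lt_of_lt_of_le hdlt ?_
            rw [Polynomial.degree_eq_natDegree hf0]
            exact_mod_cast Nat.lt_succ_iff.mp hf
          exact (Polynomial.natDegree_lt_iff_degree_lt hg0).mpr h1
        exact ih g hglt

lemma vandermonde_alt (p k : ℕ) (hk : k < p) :
    ∑ s ∈ Finset.range (p+1), (-1:ℝ)^s * (p.choose s) * ((p+k-s).choose k : ℝ) = 0 := by
  set f : Polynomial ℝ := Polynomial.C ((k.factorial : ℝ)⁻¹) *
    ∏ i ∈ Finset.range k, (Polynomial.C ((p+k-i : ℕ) : ℝ) - Polynomial.X) with hf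
  have h2 : ∀ i ∈ Finset.range k, (Polynomial.C ((p+k-i : ℕ) : ℝ) - Polynomial.X).natDegree ≤ 1 := by
    intro i _
    refine (Polynomial.natDegree_sub_le _ _).trans ?_
    simp
  have h3 : f.natDegree ≤ k := by
    refine Polynomial.natDegree_mul_le.trans ?_
    rw [Polynomial.natDegree_C, zero_add]
    refine (Polynomial.natDegree_prod_le _ _).trans ?_
    refine (Finset.sum_le_sum h2).trans ?_
    simp
  have hfdeg : f.natDegree < p := lt_of_le_of_lt h3 hk
  have hfeval : ∀ s : ℕ, s ≤ p → f.eval (s:ℝ) = ((p+k-s).choose k : ℝ) := by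
    intro s hs
    rw [hf]
    simp only [Polynomial.eval_mul, Polynomial.eval_C, Polynomial.eval_prod, Polynomial.eval_sub,
      Polynomial.eval_X]
    have hprod : ∏ i ∈ Finset.range k, (((p+k-i : ℕ):ℝ) - (s:ℝ)) = ((p+k-s).descFactorial k : ℝ) := by
      rw [Nat.descFactorial_eq_prod_range, Nat.cast_prod]
      refine Finset.prod_congr rfl fun i hi => ?_
      have hik : i < k := Finset.mem_range.mp hi
      rw [Nat.cast_sub (show i ≤ p+k by omega), Nat.cast_sub (show i ≤ p+k-s by omega),
        Nat.cast_sub (show s ≤ p+k by omega)]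
      push_cast
      ring
    rw [hprod, Nat.descFactorial_eq_factorial_mul_choose]
    push_cast
    have : (k.factorial : ℝ) ≠ 0 := by positivity
    field_simp
  have : ∑ s ∈ Finset.range (p+1), (-1:ℝ)^s * (p.choose s) * ((p+k-s).choose k : ℝ)
      = ∑ s ∈ Finset.range (p+1), (-1:ℝ)^s * (p.choose s) * f.eval (s:ℝ) := by
    refine Finset.sum_congr rfl fun s hs => ?_
    rw [hfeval s (Nat.lt_succ_iff.mp (Finset.mem_range.mp hs))]
  rw [this]
  exact altsum_poly p f hfdeg

lemma key_nat (p k s : ℕ) (hs : s ≤ p) :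
    p.choose s * p.choose s * s.factorial * (p-s+k).factorial
      = p.choose s * p.factorial * k.factorial * ((p+k-s).choose k) := by
  have h1 : p.choose s * s.factorial * (p-s).factorial = p.factorial :=
    Nat.choose_mul_factorial_mul_factorial hs
  have h2 := Nat.choose_mul_factorial_mul_factorial (show k ≤ p+k-s by omega)
  rw [show p+k-s-k = p-s by omega] at h2
  have h3 : p-s+k = p+k-s := by omega
  apply Nat.eq_of_mul_eq_mul_right (Nat.factorial_pos (p - s))
  rw [h3]
  calc p.choose s * p.choose s * s.factorial * (p+k-s).factorial * (p-s).factorial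
      = (p.choose s * s.factorial * (p-s).factorial) * (p.choose s * (p+k-s).factorial) := by ring
    _ = p.factorial * (p.choose s * (p+k-s).factorial) := by rw [h1]
    _ = p.factorial * (p.choose s * ((p+k-s).choose k * k.factorial * (p-s).factorial)) := by rw [h2]
    _ = p.choose s * p.factorial * k.factorial * ((p+k-s).choose k) * (p-s).factorial := by ring

lemma orth_monomial (p k : ℕ) (hk : k < p) :
    ∫ w in (0:ℝ)..1, (jacobiPoly 0 0 p).eval (2*w-1) * w^k = 0 := by
  have hrw : (fun w : ℝ => (jacobiPoly 0 0 p).eval (2*w-1) * w^k)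
      = fun w : ℝ => ∑ s ∈ Finset.range (p+1),
          ((p.choose (p-s) : ℝ) * (p.choose s)) * ((w-1)^s * w^((p-s)+k)) := by
    funext w
    rw [eval_jacobiPoly_affine, Finset.sum_mul]
    refine Finset.sum_congr rfl fun s hs => ?_
    simp only [Nat.add_zero]
    rw [pow_add]
    ring
  rw [hrw, intervalIntegral.integral_finset_sum (fun s _ => by
    apply Continuous.intervalIntegrable; continuity)]
  have hterm : ∀ s ∈ Finset.range (p+1),
      ∫ w in (0:ℝ)..1, ((p.choose (p-s) : ℝ) * (p.choose s)) * ((w-1)^s * w^((p-s)+k))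
        = ((-1:ℝ)^s * (p.choose s) * ((p+k-s).choose k : ℝ))
            * ((p.factorial : ℝ) * k.factorial / (p+k+1).factorial) := by
    intro s hs
    have hsp : s ≤ p := Nat.lt_succ_iff.mp (Finset.mem_range.mp hs)
    rw [intervalIntegral.integral_const_mul, beta_integral]
    rw [show s + ((p-s)+k) + 1 = p+k+1 by omega, Nat.choose_symm hsp]
    have hcast : (p.choose s : ℝ) * p.choose s * s.factorial * ((p-s+k).factorial : ℝ)
        = (p.choose s : ℝ) * p.factorial * k.factorial * (((p+k-s).choose k : ℕ) : ℝ) := by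
      exact_mod_cast key_nat p k s hsp
    calc ((p.choose s : ℝ) * (p.choose s)) * ((-1)^s * ((s.factorial : ℝ) * ((p-s)+k).factorial / ((p+k+1).factorial)))
        = ((-1:ℝ)^s) * (((p.choose s : ℝ) * p.choose s * s.factorial * ((p-s+k).factorial : ℝ)) / (p+k+1).factorial) := by
          ring_nf
      _ = ((-1:ℝ)^s) * (((p.choose s : ℝ) * p.factorial * k.factorial * (((p+k-s).choose k : ℕ) : ℝ)) / (p+k+1).factorial) := by
          rw [hcast]
      _ = ((-1:ℝ)^s * (p.choose s) * ((p+k-s).choose k : ℝ))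
            * ((p.factorial : ℝ) * k.factorial / (p+k+1).factorial) := by ring
  rw [Finset.sum_congr rfl hterm, ← Finset.sum_mul, vandermonde_alt p k hk, zero_mul]

lemma altpartial (n : ℕ) : ∑ s ∈ Finset.range (n+1), (-1:ℝ)^s * ((n+2).choose s) = (-1)^n * (n+1) := by
  have h0 := Int.alternating_sum_range_choose (n := n+2)
  rw [if_neg (by omega)] at h0
  have hR : ∑ s ∈ Finset.range (n+3), (-1:ℝ)^s * ((n+2).choose s) = 0 := by exact_mod_cast h0
  rw [Finset.sum_range_succ, Finset.sum_range_succ] at hR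
  rw [Nat.choose_self, Nat.choose_succ_self_right] at hR
  push_cast at hR
  have e1 : (-1:ℝ)^(n+1) = -(-1)^n := by rw [pow_succ]; ring
  have e2 : (-1:ℝ)^(n+2) = (-1)^n := by rw [pow_succ, pow_succ]; ring
  rw [e1, e2] at hR
  linear_combination hR

lemma Javg (n : ℕ) : ∫ w in (0:ℝ)..1, (jacobiPoly 0 2 n).eval (2*w-1) = (-1:ℝ)^n := by
  have hrw : (fun w : ℝ => (jacobiPoly 0 2 n).eval (2*w-1))
      = fun w : ℝ => ∑ s ∈ Finset.range (n+1),
          ((n.choose (n-s) : ℝ) * ((n+2).choose s)) * ((w-1)^s * w^(n-s)) := by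
    funext w
    rw [eval_jacobiPoly_affine]
    refine Finset.sum_congr rfl fun s hs => ?_
    simp only [Nat.add_zero]
    ring
  rw [hrw, intervalIntegral.integral_finset_sum (fun s _ => by
    apply Continuous.intervalIntegrable; continuity)]
  have hterm : ∀ s ∈ Finset.range (n+1),
      ∫ w in (0:ℝ)..1, ((n.choose (n-s) : ℝ) * ((n+2).choose s)) * ((w-1)^s * w^(n-s))
        = ((-1:ℝ)^s * ((n+2).choose s)) * ((n.factorial : ℝ) / (n+1).factorial) := by
    intro s hs
    have hsp : s ≤ n := Nat.lt_succ_iff.mp (Finset.mem_range.mp hs)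
    rw [intervalIntegral.integral_const_mul, beta_integral]
    rw [show s + (n-s) + 1 = n+1 by omega, Nat.choose_symm hsp]
    have hcast : (n.choose s : ℝ) * s.factorial * ((n-s).factorial : ℝ) = (n.factorial : ℝ) := by
      exact_mod_cast Nat.choose_mul_factorial_mul_factorial hsp
    calc ((n.choose s : ℝ) * ((n+2).choose s)) * ((-1)^s * ((s.factorial : ℝ) * (n-s).factorial / ((n+1).factorial)))
        = ((-1:ℝ)^s * ((n+2).choose s)) * (((n.choose s : ℝ) * s.factorial * ((n-s).factorial : ℝ)) / (n+1).factorial) := by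
          ring
      _ = ((-1:ℝ)^s * ((n+2).choose s)) * ((n.factorial : ℝ) / (n+1).factorial) := by rw [hcast]
  rw [Finset.sum_congr rfl hterm, ← Finset.sum_mul, altpartial]
  rw [Nat.factorial_succ]
  push_cast
  have h1 : ((n:ℝ)+1) ≠ 0 := by positivity
  have h2 : (n.factorial : ℝ) ≠ 0 := by positivity
  field_simp

lemma orth_poly (p : ℕ) (R : Polynomial ℝ) (hR : R.natDegree < p) :
    ∫ w in (0:ℝ)..1, (jacobiPoly 0 0 p).eval (2*w-1) * R.eval w = 0 := by
  have hc : Continuous fun w : ℝ => (jacobiPoly 0 0 p).eval (2*w-1) :=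
    (jacobiPoly 0 0 p).continuous.comp (by continuity)
  have hrw : (fun w : ℝ => (jacobiPoly 0 0 p).eval (2*w-1) * R.eval w)
      = fun w : ℝ => ∑ k ∈ Finset.range p, R.coeff k * ((jacobiPoly 0 0 p).eval (2*w-1) * w^k) := by
    funext w
    rw [Polynomial.eval_eq_sum_range' hR, Finset.mul_sum]
    exact Finset.sum_congr rfl fun k _ => by ring
  rw [hrw, intervalIntegral.integral_finset_sum (fun k _ => by
    apply Continuous.intervalIntegrable
    exact continuous_const.mul (hc.mul (continuous_pow k)))]
  refine Finset.sum_eq_zero fun k hk => ?_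
  rw [intervalIntegral.integral_const_mul, orth_monomial p k (Finset.mem_range.mp hk), mul_zero]

lemma orth_LJ (p : ℕ) (hp : 1 ≤ p) :
    ∫ w in (0:ℝ)..1,
      (jacobiPoly 0 0 p).eval (2*w-1) * (jacobiPoly 0 2 (p-1)).eval (2*w-1) = 0 := by
  set T : Polynomial ℝ := Polynomial.C 2 * Polynomial.X - Polynomial.C 1 with hT
  have hTdeg : T.natDegree ≤ 1 := by
    rw [hT]
    refine (Polynomial.natDegree_sub_le _ _).trans ?_
    simp only [Polynomial.natDegree_C, max_le_iff]
    refine ⟨Polynomial.natDegree_mul_le.trans (by simp), by omega⟩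
  have hcomp : ∀ w : ℝ, ((jacobiPoly 0 2 (p-1)).comp T).eval w = (jacobiPoly 0 2 (p-1)).eval (2*w-1) := by
    intro w
    rw [Polynomial.eval_comp, hT]
    simp
  have hdeg : ((jacobiPoly 0 2 (p-1)).comp T).natDegree < p := by
    refine lt_of_le_of_lt (Polynomial.natDegree_comp_le) ?_
    calc (jacobiPoly 0 2 (p-1)).natDegree * T.natDegree ≤ (p-1) * 1 :=
          Nat.mul_le_mul (natDegree_jacobiPoly_le 0 2 (p-1)) hTdeg
      _ < p := by omega
  have := orth_poly p ((jacobiPoly 0 2 (p-1)).comp T) hdeg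
  rw [intervalIntegral.integral_congr (g := fun w => (jacobiPoly 0 0 p).eval (2*w-1) * ((jacobiPoly 0 2 (p-1)).comp T).eval w) (fun w _ => by
    show _ = (jacobiPoly 0 0 p).eval (2*w-1) * ((jacobiPoly 0 2 (p-1)).comp T).eval w
    rw [hcomp w])]
  exact this

lemma evalL_one (p : ℕ) : (jacobiPoly 0 0 p).eval 1 = 1 := by
  unfold jacobiPoly
  rw [Polynomial.eval_finset_sum]
  rw [Finset.sum_eq_single 0 (fun s _ hs => by
    simp only [Polynomial.eval_mul, Polynomial.eval_C, Polynomial.eval_pow, Polynomial.eval_sub,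
      Polynomial.eval_add, Polynomial.eval_X, Polynomial.eval_one]
    rw [sub_self, zero_pow hs]
    ring) (fun h => absurd (Finset.mem_range.mpr (by omega)) h)]
  simp only [Polynomial.eval_mul, Polynomial.eval_C, Polynomial.eval_pow, Polynomial.eval_sub,
    Polynomial.eval_add, Polynomial.eval_X, Polynomial.eval_one]
  rw [Nat.sub_zero, Nat.add_zero, Nat.choose_self, Nat.choose_zero_right]
  norm_num

lemma evalL_neg (p : ℕ) (x : ℝ) :
    (jacobiPoly 0 0 p).eval (-x) = (-1)^p * (jacobiPoly 0 0 p).eval x := by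
  unfold jacobiPoly
  rw [Polynomial.eval_finset_sum, Polynomial.eval_finset_sum, Finset.mul_sum]
  conv_rhs => rw [← Finset.sum_range_reflect]
  refine Finset.sum_congr rfl fun s hs => ?_
  have hsp : s ≤ p := Nat.lt_succ_iff.mp (Finset.mem_range.mp hs)
  simp only [Polynomial.eval_mul, Polynomial.eval_C, Polynomial.eval_pow, Polynomial.eval_sub,
    Polynomial.eval_add, Polynomial.eval_X, Polynomial.eval_one, Nat.add_sub_cancel, Nat.add_zero]
  rw [show p - (p - s) = s by omega]
  have e1 : (-x - 1 : ℝ)^s = (-1:ℝ)^s * (x+1)^s := by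
    rw [show (-x - 1 : ℝ) = -(x+1) by ring, neg_pow]
  have e2 : (-x + 1 : ℝ)^(p-s) = (-1:ℝ)^(p-s) * (x-1)^(p-s) := by
    rw [show (-x + 1 : ℝ) = -(x-1) by ring, neg_pow]
  have hsgn : (-1:ℝ)^s * (-1:ℝ)^(p-s) = (-1:ℝ)^p := by
    rw [← pow_add]; congr 1; omega
  calc (↑(p.choose (p - s)) * ↑(p.choose s) / 2 ^ p) * (-x - 1 : ℝ)^s * (-x + 1 : ℝ)^(p-s)
      = ((-1:ℝ)^s * (-1:ℝ)^(p-s)) * ((↑(p.choose (p - s)) * ↑(p.choose s) / 2 ^ p) * (x+1)^s * (x-1)^(p-s)) := by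
        rw [e1, e2]; ring
    _ = (-1:ℝ)^p * ((↑(p.choose s) * ↑(p.choose (p-s)) / 2 ^ p) * (x-1)^(p-s) * (x+1)^s) := by
        rw [hsgn]; ring


/-- The closed unit reference triangle in `ℝ × ℝ` with vertices
`(0,0)`, `(1,0)`, `(0,1)`. -/
def refTriangle : Set (ℝ × ℝ) :=
  {x : ℝ × ℝ | 0 ≤ x.1 ∧ 0 ≤ x.2 ∧ x.1 + x.2 ≤ 1}

lemma triangle_integral (F : ℝ×ℝ → ℝ) (hF : Continuous F) :
    ∫ z in refTriangle, F z = ∫ x in (0:ℝ)..1, ∫ y in (0:ℝ)..(1-x), F (x, y) := by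
  have hTmeas : MeasurableSet refTriangle := by
    have hcl : IsClosed refTriangle := by
      have : refTriangle = {z : ℝ×ℝ | 0 ≤ z.1} ∩ ({z | 0 ≤ z.2} ∩ {z | z.1 + z.2 ≤ 1}) := by
        ext z; simp [refTriangle]
      rw [this]
      exact (isClosed_le continuous_const continuous_fst).inter
        ((isClosed_le continuous_const continuous_snd).inter
          (isClosed_le (continuous_fst.add continuous_snd) continuous_const))
    exact hcl.measurableSet
  have hsub : refTriangle ⊆ Set.Icc ((0:ℝ),(0:ℝ)) (1,1) := by
    rintro z ⟨h1, h2, h3⟩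
    simp only [Set.mem_Icc, Prod.le_def]
    exact ⟨⟨h1, h2⟩, ⟨by linarith, by linarith⟩⟩
  have hint : IntegrableOn F refTriangle := (hF.integrableOn_Icc).mono_set hsub
  have hind : Integrable (refTriangle.indicator F) := (integrable_indicator_iff hTmeas).mpr hint
  rw [← MeasureTheory.integral_indicator hTmeas]
  rw [MeasureTheory.Measure.volume_eq_prod] at hind ⊢
  rw [MeasureTheory.integral_prod _ hind]
  have hin : ∀ x : ℝ, (∫ y, refTriangle.indicator F (x, y))
      = Set.indicator (Set.Icc (0:ℝ) 1) (fun x => ∫ y in (0:ℝ)..(1-x), F (x,y)) x := by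
    intro x
    by_cases hx : x ∈ Set.Icc (0:ℝ) 1
    · rw [Set.indicator_of_mem hx]
      obtain ⟨hx0, hx1⟩ := hx
      have hfun : (fun y => refTriangle.indicator F (x, y))
          = (Set.Icc (0:ℝ) (1-x)).indicator (fun y => F (x,y)) := by
        funext y
        by_cases hy : y ∈ Set.Icc (0:ℝ) (1-x)
        · rw [Set.indicator_of_mem hy, Set.indicator_of_mem]
          exact ⟨hx0, hy.1, by linarith [hy.2]⟩
        · rw [Set.indicator_of_notMem hy, Set.indicator_of_notMem]
          intro hmem
          exact hy ⟨hmem.2.1, by linarith [hmem.2.2]⟩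
      rw [hfun, MeasureTheory.integral_indicator measurableSet_Icc,
        MeasureTheory.integral_Icc_eq_integral_Ioc,
        ← intervalIntegral.integral_of_le (by linarith : (0:ℝ) ≤ 1-x)]
    · rw [Set.indicator_of_notMem hx]
      have hzero : (fun y => refTriangle.indicator F (x, y)) = fun _ => (0:ℝ) := by
        funext y
        rw [Set.indicator_of_notMem]
        intro hmem
        simp only [Set.mem_Icc, not_and_or, not_le] at hx
        obtain ⟨h1, h2, h3⟩ := hmem
        rcases hx with h | h
        · exact absurd h1 (not_le.mpr h)
        · simp only at h1 h2 h3; linarith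
      rw [hzero]
      simp
  simp_rw [hin]
  rw [MeasureTheory.integral_indicator measurableSet_Icc,
    MeasureTheory.integral_Icc_eq_integral_Ioc,
    ← intervalIntegral.integral_of_le (by norm_num : (0:ℝ) ≤ 1)]

theorem integral_jacobi_mul_deriv_legendre_refTriangle (p : ℕ) (hp : 1 ≤ p)
    (hodd : Odd p) :
    (∫ x in refTriangle,
        jacobiP 0 2 (p - 1) (1 - 2 * (1 - x.1 - x.2)) *
          deriv (fun s => jacobiP 0 0 p s) (1 - 2 * x.1))
      = (-1 : ℝ) ^ (p - 1) * (1 / 2) ∧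
    ((-1 : ℝ) ^ (p - 1) * (1 / 2 : ℝ) = 1 / 2) := by
  have hpe : Even (p - 1) := by
    obtain ⟨m, hm⟩ := hodd
    exact ⟨m, by omega⟩
  have hsgn : (-1 : ℝ) ^ (p - 1) = 1 := Even.neg_one_pow hpe
  refine ⟨?_, by rw [hsgn, one_mul]⟩
  set Lp := jacobiPoly 0 0 p with hLp
  set Jq := jacobiPoly 0 2 (p-1) with hJq
  set dLp := Lp.derivative with hdLp
  set A := antider Jq with hA
  -- rewrite the integrand
  have hderiv_eq : deriv (fun s => jacobiP 0 0 p s) = fun x => dLp.eval x := by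
    funext x
    have : (fun s => jacobiP 0 0 p s) = fun s => Lp.eval s := funext (jacobiP_eq_eval 0 0 p)
    rw [this, Polynomial.deriv]
  have hFeq : ∀ z : ℝ × ℝ,
      jacobiP 0 2 (p - 1) (1 - 2 * (1 - z.1 - z.2)) * deriv (fun s => jacobiP 0 0 p s) (1 - 2 * z.1)
        = Jq.eval (2*(z.1+z.2) - 1) * dLp.eval (1 - 2*z.1) := by
    intro z
    rw [hderiv_eq, jacobiP_eq_eval, show (1 - 2 * (1 - z.1 - z.2)) = 2*(z.1+z.2) - 1 by ring]
  have hFcont : Continuous fun z : ℝ×ℝ => Jq.eval (2*(z.1+z.2) - 1) * dLp.eval (1 - 2*z.1) :=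
    (Jq.continuous.comp (by continuity)).mul (dLp.continuous.comp (by continuity))
  rw [MeasureTheory.setIntegral_congr_fun (by
      have : refTriangle = {z : ℝ×ℝ | 0 ≤ z.1} ∩ ({z | 0 ≤ z.2} ∩ {z | z.1 + z.2 ≤ 1}) := by
        ext z; simp [refTriangle]
      rw [this]
      exact ((isClosed_le continuous_const continuous_fst).inter
        ((isClosed_le continuous_const continuous_snd).inter
          (isClosed_le (continuous_fst.add continuous_snd) continuous_const))).measurableSet)
    (fun z _ => hFeq z)]
  rw [triangle_integral _ hFcont]
  -- value of ∫_{-1}^1 Jq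
  have hJint : A.eval 1 - A.eval (-1) = 2 * (-1:ℝ)^(p-1) := by
    have h1 : ∫ w in (0:ℝ)..1, Jq.eval (2*w + (-1)) = (2:ℝ)⁻¹ • ∫ t in (2*0 + (-1) : ℝ)..(2*1 + (-1) : ℝ), Jq.eval t :=
      intervalIntegral.integral_comp_mul_add (fun t => Jq.eval t) two_ne_zero (-1)
    have h2 : ∫ w in (0:ℝ)..1, Jq.eval (2*w + (-1)) = (-1:ℝ)^(p-1) := by
      rw [show (fun w : ℝ => Jq.eval (2*w + (-1))) = fun w : ℝ => Jq.eval (2*w - 1) by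
        funext w; rw [show (2*w + (-1) : ℝ) = 2*w - 1 by ring]]
      exact Javg (p-1)
    rw [h2, show (2*0 + (-1) : ℝ) = -1 by norm_num, show (2*1 + (-1) : ℝ) = 1 by norm_num,
      integral_poly_eval] at h1
    rw [smul_eq_mul] at h1
    linarith [h1]
  -- inner integral
  have hinner : ∀ x : ℝ, ∫ y in (0:ℝ)..(1-x), Jq.eval (2*(x+y) - 1) * dLp.eval (1 - 2*x)
      = dLp.eval (1 - 2*x) * ((2:ℝ)⁻¹ * (A.eval 1 - A.eval (2*x - 1))) := by
    intro x
    rw [intervalIntegral.integral_mul_const]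
    have hfun : (fun y : ℝ => Jq.eval (2*(x+y) - 1)) = fun y : ℝ => Jq.eval (2*y + (2*x - 1)) := by
      funext y; congr 1; ring
    rw [hfun, intervalIntegral.integral_comp_mul_add (fun t => Jq.eval t) two_ne_zero (2*x-1)]
    rw [show (2*0 + (2*x - 1) : ℝ) = 2*x - 1 by ring, show (2*(1-x) + (2*x - 1) : ℝ) = 1 by ring,
      integral_poly_eval]
    rw [smul_eq_mul]
    ring
  rw [intervalIntegral.integral_congr (fun x _ => hinner x)]
  -- integration by parts
  set u : ℝ → ℝ := fun x => -(2:ℝ)⁻¹ * Lp.eval (1 - 2*x) with hu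
  set v : ℝ → ℝ := fun x => (2:ℝ)⁻¹ * (A.eval 1 - A.eval (2*x - 1)) with hv
  have hu' : ∀ x ∈ Set.uIcc (0:ℝ) 1, HasDerivAt u (dLp.eval (1 - 2*x)) x := by
    intro x _
    have h1 : HasDerivAt (fun x : ℝ => 1 - 2*x) (-2) x := by
      simpa using ((hasDerivAt_id x).const_mul 2).const_sub 1
    have h2 : HasDerivAt (fun x : ℝ => Lp.eval (1 - 2*x)) (dLp.eval (1 - 2*x) * (-2)) x :=
      by have := HasDerivAt.comp x (Lp.hasDerivAt (1 - 2*x)) h1; exact this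
    have h3 := h2.const_mul (-(2:ℝ)⁻¹)
    exact h3.congr_deriv (by ring)
  have hv' : ∀ x ∈ Set.uIcc (0:ℝ) 1, HasDerivAt v (-(Jq.eval (2*x - 1))) x := by
    intro x _
    have h1 : HasDerivAt (fun x : ℝ => 2*x - 1) 2 x := by
      simpa using ((hasDerivAt_id x).const_mul 2).sub_const 1
    have h2 : HasDerivAt (fun x : ℝ => A.eval (2*x - 1)) (A.derivative.eval (2*x - 1) * 2) x :=
      by have := HasDerivAt.comp x (A.hasDerivAt (2*x - 1)) h1; exact this
    rw [hA, antider_derivative] at h2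
    have h3 := (h2.const_sub (A.eval 1)).const_mul ((2:ℝ)⁻¹)
    exact h3.congr_deriv (by ring)
  have hibp := intervalIntegral.integral_mul_deriv_eq_deriv_mul hu' hv'
    (by apply Continuous.intervalIntegrable; exact dLp.continuous.comp (by continuity))
    (by apply Continuous.intervalIntegrable; exact (Jq.continuous.comp (by continuity)).neg)
  -- hibp : ∫ u * v' = u 1 * v 1 - u 0 * v 0 - ∫ u' * v
  have horth : ∫ x in (0:ℝ)..1, u x * (-(Jq.eval (2*x - 1))) = 0 := by
    have hfun : (fun x : ℝ => u x * (-(Jq.eval (2*x - 1))))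
        = fun x : ℝ => (2:ℝ)⁻¹ * (Lp.eval (1 - 2*x) * Jq.eval (2*x - 1)) := by
      funext x; rw [hu]; ring
    have hodd' : ∀ x : ℝ, Lp.eval (1 - 2*x) = -(Lp.eval (2*x - 1)) := by
      intro x
      rw [show (1 - 2*x : ℝ) = -(2*x - 1) by ring, hLp, evalL_neg, Odd.neg_one_pow hodd]
      ring
    rw [hfun]
    rw [intervalIntegral.integral_congr (g := fun x : ℝ => -(2:ℝ)⁻¹ * (Lp.eval (2*x - 1) * Jq.eval (2*x - 1)))
      (fun x _ => by simp only; rw [hodd' x]; ring)]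
    rw [intervalIntegral.integral_const_mul, orth_LJ p hp, mul_zero]
  rw [horth] at hibp
  -- now compute endpoint values
  have hv1 : v 1 = 0 := by rw [hv]; norm_num
  have hu0 : u 0 = -(2:ℝ)⁻¹ := by
    rw [hu]
    simp only
    rw [show (1 - 2*(0:ℝ) : ℝ) = 1 by norm_num, hLp, evalL_one, mul_one]
  have hv0 : v 0 = (-1:ℝ)^(p-1) := by
    rw [hv]
    simp only
    rw [show (2*(0:ℝ) - 1 : ℝ) = -1 by norm_num]
    rw [show A.eval 1 - A.eval (-1) = 2 * (-1:ℝ)^(p-1) from hJint]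
    ring
  have hfin : ∫ x in (0:ℝ)..1, dLp.eval (1 - 2*x) * v x = u 1 * v 1 - u 0 * v 0 := by
    linarith [hibp]
  have hgoal : ∫ x in (0:ℝ)..1, dLp.eval (1 - 2*x) * ((2:ℝ)⁻¹ * (A.eval 1 - A.eval (2*x - 1)))
      = u 1 * v 1 - u 0 * v 0 := by
    rw [← hfin]
  rw [hgoal, hv1, mul_zero, hu0, hv0]
  ring
end
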